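/- arXiv:1202.4659 — 8 statements merged into one kernel-verified Lean document; each statement's English description precedes it below -/
import Mathlib

section
/- Let n ≥ 1 and let f ∈ ℂ[z₁,…,zₙ] be a nonzero polynomial. Then every connected component of the complement ℝⁿ ∖ A_f of the amoeba of f is a convex subset of ℝⁿ. -/
set_option linter.unusedVariables false
set_option maxHeartbeats 1000000

open Complex MeasureTheory intervalIntegral Polynomial
open scoped Real

namespace AmoebaProof

variable {ι : Type*}

/-- The loop value: `θ ↦ ∑ i in s, a i * exp (m i * (θ * I))`. -/
noncomputable def G (s : Finset ι) (m : ι → ℤ) (a : ι → ℂ) (θ : ℝ) : ℂ :=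
  ∑ i ∈ s, a i * Complex.exp ((m i : ℂ) * (θ * Complex.I))

/-- Its `θ`-derivative. -/
noncomputable def Gd (s : Finset ι) (m : ι → ℤ) (a : ι → ℂ) (θ : ℝ) : ℂ :=
  ∑ i ∈ s, a i * ((m i : ℂ) * Complex.I) * Complex.exp ((m i : ℂ) * (θ * Complex.I))

/-- The (unnormalized) winding number of the loop. -/
noncomputable def wind (s : Finset ι) (m : ι → ℤ) (a : ι → ℂ) : ℂ :=
  ∫ θ in (0:ℝ)..(2 * π), Gd s m a θ / G s m a θ

/-- The Laurent sum function. -/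
noncomputable def LL (s : Finset ι) (m : ι → ℤ) (B : ι → ℂ) (q : ℂ) : ℂ :=
  ∑ i ∈ s, B i * q ^ (m i)

/-- The associated polynomial. -/
noncomputable def PP (s : Finset ι) (m : ι → ℤ) (B : ι → ℂ) (N : ℕ) : Polynomial ℂ :=
  ∑ i ∈ s, Polynomial.C (B i) * Polynomial.X ^ ((m i + N).toNat)

lemma hasDerivAt_G (s : Finset ι) (m : ι → ℤ) (a : ι → ℂ) (θ : ℝ) :
    HasDerivAt (G s m a) (Gd s m a θ) θ := by
  unfold G Gd
  apply HasDerivAt.fun_sum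
  intro i _
  have h1 : HasDerivAt (fun θ : ℝ => (θ : ℂ) * Complex.I) Complex.I θ := by
    simpa using (Complex.ofRealCLM.hasDerivAt (x := θ)).mul_const Complex.I
  have h2 : HasDerivAt (fun θ : ℝ => (m i : ℂ) * ((θ : ℂ) * Complex.I))
      ((m i : ℂ) * Complex.I) θ := by
    simpa using h1.const_mul (m i : ℂ)
  have h3 := (Complex.hasDerivAt_exp ((m i : ℂ) * ((θ:ℂ) * Complex.I))).comp θ h2
  have h4 := h3.const_mul (a i)
  refine h4.congr_deriv (Eq.symm ?_)
  ring

lemma continuous_G (s : Finset ι) (m : ι → ℤ) :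
    Continuous (fun p : (ι → ℂ) × ℝ => G s m p.1 p.2) := by
  unfold G
  apply continuous_finset_sum
  intro i _
  exact ((continuous_apply i).comp continuous_fst).mul
    (Complex.continuous_exp.comp (by fun_prop))

lemma continuous_Gd (s : Finset ι) (m : ι → ℤ) :
    Continuous (fun p : (ι → ℂ) × ℝ => Gd s m p.1 p.2) := by
  unfold Gd
  apply continuous_finset_sum
  intro i _
  exact (((continuous_apply i).comp continuous_fst).mul continuous_const).mul
    (Complex.continuous_exp.comp (by fun_prop))

lemma G_periodic (s : Finset ι) (m : ι → ℤ) (a : ι → ℂ) :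
    G s m a (2 * π) = G s m a 0 := by
  unfold G
  refine Finset.sum_congr rfl fun i _ => ?_
  congr 1
  rw [Complex.ofReal_zero, zero_mul, mul_zero, Complex.exp_zero]
  have : ((m i : ℂ)) * (((2 * π : ℝ) : ℂ) * Complex.I) = (m i : ℤ) * (2 * ↑π * Complex.I) := by
    push_cast; ring
  rw [this, Complex.exp_int_mul_two_pi_mul_I]

lemma wind_int (s : Finset ι) (m : ι → ℤ) (a : ι → ℂ) (h : ∀ θ : ℝ, G s m a θ ≠ 0) :
    ∃ j : ℤ, wind s m a = (j : ℂ) * (2 * π * Complex.I) := by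
  have hGc : Continuous (G s m a) :=
    (continuous_G s m).comp (Continuous.prodMk_right a)
  have hGdc : Continuous (Gd s m a) :=
    (continuous_Gd s m).comp (Continuous.prodMk_right a)
  have hic : Continuous (fun θ => Gd s m a θ / G s m a θ) := hGdc.div hGc h
  set H : ℝ → ℂ := fun θ => ∫ x in (0:ℝ)..θ, Gd s m a x / G s m a x with hH
  have hHd : ∀ θ : ℝ, HasDerivAt H (Gd s m a θ / G s m a θ) θ := fun θ =>
    (hic.integral_hasStrictDerivAt 0 θ).hasDerivAt
  set φ : ℝ → ℂ := fun θ => G s m a θ * Complex.exp (-H θ) with hφ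
  have hφd : ∀ θ : ℝ, HasDerivAt φ 0 θ := by
    intro θ
    have h1 : HasDerivAt (fun θ => Complex.exp (-H θ))
        (Complex.exp (-H θ) * (-(Gd s m a θ / G s m a θ))) θ := by
      have := ((hHd θ).neg)
      have h2 := (Complex.hasDerivAt_exp (-H θ)).comp θ this
      simpa [mul_comm, Function.comp_def] using h2
    have h3 := (hasDerivAt_G s m a θ).mul h1
    refine h3.congr_deriv (Eq.symm ?_)
    linear_combination (Gd s m a θ * Complex.exp (-H θ)) * div_self (h θ)
  have hconst : φ (2 * π) = φ 0 := by
    have : ∀ θ, deriv φ θ = 0 := fun θ => (hφd θ).deriv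
    have hdiff : Differentiable ℝ φ := fun θ => (hφd θ).differentiableAt
    exact (is_const_of_deriv_eq_zero hdiff this) _ _
  have hH0 : H 0 = 0 := by simp [hH]
  have hG2 : G s m a (2 * π) = G s m a 0 := G_periodic s m a
  rw [hφ] at hconst
  simp only [hG2, hH0, neg_zero, Complex.exp_zero, mul_one] at hconst
  have hexp : Complex.exp (-H (2 * π)) = 1 := by
    have : G s m a 0 * Complex.exp (-H (2 * π)) = G s m a 0 * 1 := by
      simpa using hconst
    exact mul_left_cancel₀ (h 0) this
  have hexp2 : Complex.exp (H (2 * π)) = 1 := by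
    rw [← Complex.exp_zero]
    rw [← Complex.exp_zero] at hexp
    have := congrArg (· * Complex.exp (H (2*π))) hexp
    simpa [← Complex.exp_add] using this.symm
  obtain ⟨j, hj⟩ := Complex.exp_eq_one_iff.mp hexp2
  exact ⟨j, by simpa [wind, ← hH] using hj⟩

lemma wind_const (s : Finset ι) (m : ι → ℤ) {X : Type*} [TopologicalSpace X]
    [PreconnectedSpace X] (c : X → ι → ℂ) (hc : Continuous c)
    (h : ∀ x : X, ∀ θ : ℝ, G s m (c x) θ ≠ 0) (x y : X) :
    wind s m (c x) = wind s m (c y) := by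
  set F : X → ℂ := fun x => wind s m (c x) with hF
  have hFc : Continuous F := by
    have : Continuous (Function.uncurry fun (x : X) (θ : ℝ) => Gd s m (c x) θ / G s m (c x) θ) := by
      apply Continuous.div
      · exact (continuous_Gd s m).comp ((hc.comp continuous_fst).prodMk continuous_snd)
      · exact (continuous_G s m).comp ((hc.comp continuous_fst).prodMk continuous_snd)
      · rintro ⟨x, θ⟩; exact h x θ
    exact continuous_parametric_intervalIntegral_of_continuous' this 0 (2*π)
  have hint : ∀ x : X, ∃ j : ℤ, F x = (j : ℂ) * (2 * π * Complex.I) :=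
    fun x => wind_int s m (c x) (h x)
  set g : X → ℝ := fun x => (F x / (2 * π * Complex.I)).re with hg
  have hgc : Continuous g := (Complex.continuous_re.comp (hFc.div_const _))
  have hgint : ∀ x : X, ∃ j : ℤ, g x = (j : ℝ) := by
    intro x
    obtain ⟨j, hj⟩ := hint x
    refine ⟨j, ?_⟩
    have h2 : (2 * (π:ℂ) * Complex.I) ≠ 0 := by
      simp [Real.pi_ne_zero, Complex.I_ne_zero]
    rw [hg]; simp only [hj]
    rw [mul_div_assoc, div_self h2, mul_one]
    simp
  obtain ⟨jx, hjx⟩ := hgint x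
  obtain ⟨jy, hjy⟩ := hgint y
  have hgeq : g x = g y := by
    by_contra hne
    rcases lt_or_gt_of_ne hne with hlt | hlt
    · have hmem : g x + 1/2 ∈ Set.Icc (g x) (g y) := by
        constructor
        · linarith
        · -- g x < g y, both integers, so g y ≥ g x + 1
          have : jx < jy := by exact_mod_cast hjx ▸ hjy ▸ hlt
          have : (jx : ℝ) + 1 ≤ jy := by exact_mod_cast this
          rw [hjx, hjy]; linarith
      obtain ⟨z, hz⟩ := intermediate_value_univ x y hgc hmem
      obtain ⟨jz, hjz⟩ := hgint z
      rw [hjz, hjx] at hz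
      have : jx < jz := by
        have : (jx:ℝ) < jz := by linarith
        exact_mod_cast this
      have : (jx:ℝ) + 1 ≤ jz := by exact_mod_cast this
      linarith
    · have hmem : g y + 1/2 ∈ Set.Icc (g y) (g x) := by
        constructor
        · linarith
        · have : jy < jx := by exact_mod_cast hjy ▸ hjx ▸ hlt
          have : (jy : ℝ) + 1 ≤ jx := by exact_mod_cast this
          rw [hjx, hjy]; linarith
      obtain ⟨z, hz⟩ := intermediate_value_univ y x hgc hmem
      obtain ⟨jz, hjz⟩ := hgint z
      rw [hjz, hjy] at hz
      have : jy < jz := by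
        have : (jy:ℝ) < jz := by linarith
        exact_mod_cast this
      have : (jy:ℝ) + 1 ≤ jz := by exact_mod_cast this
      linarith
  -- now conclude F x = F y
  obtain ⟨ja, hja⟩ := hint x
  obtain ⟨jb, hjb⟩ := hint y
  have h2 : (2 * (π:ℂ) * Complex.I) ≠ 0 := by
    simp [Real.pi_ne_zero, Complex.I_ne_zero]
  have hgx : g x = (ja : ℝ) := by
    rw [hg]; simp only [hja]; rw [mul_div_assoc, div_self h2, mul_one]; simp
  have hgy : g y = (jb : ℝ) := by
    rw [hg]; simp only [hjb]; rw [mul_div_assoc, div_self h2, mul_one]; simp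
  have : ja = jb := by
    have : (ja:ℝ) = jb := by rw [← hgx, ← hgy, hgeq]
    exact_mod_cast this
  show F x = F y
  rw [hja, hjb, this]

lemma PP_eval (s : Finset ι) (m : ι → ℤ) (B : ι → ℂ) (N : ℕ)
    (hN : ∀ i ∈ s, 0 ≤ m i + N) {q : ℂ} (hq : q ≠ 0) :
    (PP s m B N).eval q = q ^ (N : ℕ) * LL s m B q := by
  unfold PP LL
  rw [Polynomial.eval_finset_sum, Finset.mul_sum]
  refine Finset.sum_congr rfl fun i hi => ?_
  simp only [Polynomial.eval_mul, Polynomial.eval_C, Polynomial.eval_pow, Polynomial.eval_X]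
  have h1 : (q ^ ((m i + N).toNat) : ℂ) = q ^ ((m i + N : ℤ)) := by
    rw [← zpow_natCast, Int.toNat_of_nonneg (hN i hi)]
  rw [h1, zpow_add₀ hq, zpow_natCast]
  ring

lemma G_eq_LL (s : Finset ι) (m : ι → ℤ) (B : ι → ℂ) (σ θ : ℝ) :
    G s m (fun i => B i * Complex.exp ((σ : ℂ) * (m i : ℂ))) θ
      = LL s m B (Complex.exp ((σ : ℂ) + θ * Complex.I)) := by
  unfold G LL
  refine Finset.sum_congr rfl fun i _ => ?_
  rw [← Complex.exp_int_mul, mul_assoc, ← Complex.exp_add]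
  congr 2
  push_cast
  ring

-- per-root winding integral
lemma per_root (σ : ℝ) (ρ : ℂ) (hρ : ‖ρ‖ ≠ Real.exp σ) :
    (∫ θ in (0:ℝ)..(2*π), Complex.I * Complex.exp ((σ:ℂ) + θ * Complex.I) /
        (Complex.exp ((σ:ℂ) + θ * Complex.I) - ρ))
      = if ‖ρ‖ < Real.exp σ then 2 * π * Complex.I else 0 := by
  set u : ℝ → ℂ := fun θ => Complex.exp ((σ:ℂ) + θ * Complex.I) with hu
  have hune : ∀ θ, u θ ≠ 0 := fun θ => Complex.exp_ne_zero _
  have habs : ∀ θ : ℝ, ‖u θ‖ = Real.exp σ := by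
    intro θ
    rw [hu]
    simp [Complex.norm_exp]
  have h0 : ∀ θ : ℝ, HasDerivAt (fun t : ℝ => ((t : ℝ) : ℂ)) 1 θ := by
    intro θ; simpa using (hasDerivAt_id θ).ofReal_comp
  have hud : ∀ θ : ℝ, HasDerivAt u (Complex.I * u θ) θ := by
    intro θ
    have h1 : HasDerivAt (fun t : ℝ => (σ:ℂ) + (t:ℂ) * Complex.I) (1 * Complex.I) θ :=
      (((h0 θ)).mul_const _).const_add _
    have h3 := h1.cexp
    rw [hu]
    convert h3 using 1
    ring
  have hsub : ∀ θ : ℝ, u θ - ρ ≠ 0 := by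
    intro θ h
    apply hρ
    rw [← habs θ, sub_eq_zero.mp h]
  by_cases hlt : ‖ρ‖ < Real.exp σ
  · -- inside: antiderivative θ I + log (1 - ρ / u θ)
    rw [if_pos hlt]
    set K : ℝ → ℂ := fun θ => θ * Complex.I + Complex.log (1 - ρ * Complex.exp (-((σ:ℂ) + θ * Complex.I))) with hK
    have hw : ∀ θ : ℝ, (1 - ρ * Complex.exp (-((σ:ℂ) + θ * Complex.I))) = (u θ - ρ) / u θ := by
      intro θ
      rw [Complex.exp_neg]
      field_simp [hune θ]
      simp only [hu]; ring
    have hwne : ∀ θ : ℝ, (1 - ρ * Complex.exp (-((σ:ℂ) + θ * Complex.I))) ≠ 0 := by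
      intro θ
      rw [hw θ]
      exact div_ne_zero (hsub θ) (hune θ)
    have hslit : ∀ θ : ℝ, (1 - ρ * Complex.exp (-((σ:ℂ) + θ * Complex.I))) ∈ Complex.slitPlane := by
      intro θ
      left
      have h1 : ‖ρ * Complex.exp (-((σ:ℂ) + θ * Complex.I))‖ < 1 := by
        rw [norm_mul, Complex.norm_exp]
        have hre : (-((σ:ℂ) + θ * Complex.I)).re = -σ := by simp
        rw [hre, show (1:ℝ) = Real.exp σ * Real.exp (-σ) by rw [← Real.exp_add]; simp]
        exact mul_lt_mul_of_pos_right hlt (Real.exp_pos _)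
      have h2 := (norm_sub_le 1 (ρ * Complex.exp (-((σ:ℂ) + θ * Complex.I))))
      have h3 : (ρ * Complex.exp (-((σ:ℂ) + θ * Complex.I))).re ≤ ‖ρ * Complex.exp (-((σ:ℂ) + θ * Complex.I))‖ := Complex.re_le_norm _
      simp only [Complex.sub_re, Complex.one_re]
      linarith
    have hKd : ∀ θ : ℝ, HasDerivAt K (Complex.I * u θ / (u θ - ρ)) θ := by
      intro θ
      have h1 : HasDerivAt (fun θ : ℝ => (θ:ℂ) * Complex.I) Complex.I θ := by
        simpa using ((Complex.ofRealCLM.hasDerivAt (x := θ)).mul_const Complex.I)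
      have h2 : HasDerivAt (fun θ : ℝ => Complex.exp (-((σ:ℂ) + θ * Complex.I)))
          (-Complex.I * Complex.exp (-((σ:ℂ) + θ * Complex.I))) θ := by
        have hin : HasDerivAt (fun θ : ℝ => -((σ:ℂ) + θ * Complex.I)) (-Complex.I) θ := by
          exact (((hasDerivAt_id θ).ofReal_comp.mul_const Complex.I).const_add (σ:ℂ)).neg.congr_deriv (by simp)
        simpa [mul_comm, Function.comp_def] using (Complex.hasDerivAt_exp _).comp θ hin
      have h3 : HasDerivAt (fun θ : ℝ => 1 - ρ * Complex.exp (-((σ:ℂ) + θ * Complex.I)))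
          (-(ρ * (-Complex.I * Complex.exp (-((σ:ℂ) + θ * Complex.I))))) θ := by
        exact ((h2.const_mul ρ).const_sub 1)
      have h4 := (Complex.hasDerivAt_log (hslit θ)).comp θ h3
      have h5 := (h1.add h4)
      refine h5.congr_deriv (Eq.symm ?_)
      rw [hw θ]
      rw [Complex.exp_neg]
      field_simp [hune θ, hsub θ]
      simp only [hu]; ring_nf
    have : (∫ θ in (0:ℝ)..(2*π), Complex.I * u θ / (u θ - ρ)) = K (2*π) - K 0 := by
      apply intervalIntegral.integral_eq_sub_of_hasDerivAt
      · intro t _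
        exact hKd t
      · apply Continuous.intervalIntegrable
        exact (continuous_const.mul (Complex.continuous_exp.comp (by fun_prop))).div
          ((Complex.continuous_exp.comp (by fun_prop)).sub continuous_const) hsub
    rw [this, hK]
    have hper : Complex.exp (-((σ:ℂ) + (2*π:ℝ) * Complex.I)) = Complex.exp (-((σ:ℂ) + (0:ℝ) * Complex.I)) := by
      rw [Complex.exp_eq_exp_iff_exists_int]
      exact ⟨-1, by push_cast; ring⟩
    simp only [hper]
    push_cast
    ring
  · -- outside
    rw [if_neg hlt]
    push_neg at hlt
    have hgt : Real.exp σ < ‖ρ‖ := lt_of_le_of_ne hlt (Ne.symm hρ)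
    have hρne : ρ ≠ 0 := by
      intro h; rw [h] at hgt; simp at hgt; linarith [Real.exp_pos σ, hgt]
    set K : ℝ → ℂ := fun θ => Complex.log (1 - u θ / ρ) with hK
    have hwne : ∀ θ : ℝ, (1 - u θ / ρ) ≠ 0 := by
      intro θ h
      have h2 : u θ / ρ = 1 := by linear_combination -h
      rw [div_eq_one_iff_eq hρne] at h2
      exact (hsub θ) (by rw [h2]; ring)
    have hslit : ∀ θ : ℝ, (1 - u θ / ρ) ∈ Complex.slitPlane := by
      intro θ
      left
      have h1 : ‖u θ / ρ‖ < 1 := by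
        rw [norm_div, habs θ]
        rw [div_lt_one (lt_trans (Real.exp_pos σ) hgt)]
        exact hgt
      have h3 : (u θ / ρ).re ≤ ‖u θ / ρ‖ := Complex.re_le_norm _
      simp only [Complex.sub_re, Complex.one_re]
      linarith
    have hKd : ∀ θ : ℝ, HasDerivAt K (Complex.I * u θ / (u θ - ρ)) θ := by
      intro θ
      have h2 : HasDerivAt (fun θ : ℝ => 1 - u θ / ρ) (-(Complex.I * u θ / ρ)) θ := by
        have := ((hud θ).div_const ρ).const_sub 1
        simpa using this
      have h4 := (Complex.hasDerivAt_log (hslit θ)).comp θ h2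
      refine h4.congr_deriv (Eq.symm ?_)
      rw [eq_comm, inv_mul_eq_div, div_eq_div_iff (hwne θ) (hsub θ)]
      field_simp
      ring
    have : (∫ θ in (0:ℝ)..(2*π), Complex.I * u θ / (u θ - ρ)) = K (2*π) - K 0 := by
      apply intervalIntegral.integral_eq_sub_of_hasDerivAt
      · intro t _
        exact hKd t
      · apply Continuous.intervalIntegrable
        exact (continuous_const.mul (Complex.continuous_exp.comp (by fun_prop))).div
          ((Complex.continuous_exp.comp (by fun_prop)).sub continuous_const) hsub
    have hper : u (2*π) = u 0 := by
      rw [hu]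
      simp only
      rw [Complex.exp_eq_exp_iff_exists_int]
      exact ⟨1, by push_cast; ring⟩
    rw [this]
    show Complex.log (1 - u (2*π) / ρ) - Complex.log (1 - u 0 / ρ) = 0
    rw [hper]; ring

lemma multiset_prod_hasDerivAt' (u : ℝ → ℂ) (u' : ℂ) {θ : ℝ} (hu : HasDerivAt u u' θ)
    (t : Multiset ℂ) (h : ∀ ρ ∈ t, u θ - ρ ≠ 0) :
    HasDerivAt (fun θ => (t.map fun ρ => u θ - ρ).prod)
      ((t.map fun ρ => u θ - ρ).prod * (t.map fun ρ => u' / (u θ - ρ)).sum) θ := by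
  induction t using Multiset.induction with
  | empty => simpa using hasDerivAt_const θ (1:ℂ)
  | cons ρ rest ih =>
    have hρ : u θ - ρ ≠ 0 := h ρ (Multiset.mem_cons_self _ _)
    have hrest := ih (fun ρ' hρ' => h ρ' (Multiset.mem_cons_of_mem hρ'))
    have hhead : HasDerivAt (fun θ => u θ - ρ) u' θ := hu.sub_const ρ
    have := hhead.mul hrest
    simp only [Multiset.map_cons, Multiset.prod_cons, Multiset.sum_cons]
    refine this.congr_deriv (Eq.symm ?_)
    linear_combination (u' * (rest.map fun ρ => u θ - ρ).prod) * div_self hρ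

lemma multiset_sum_continuous (t : Multiset ℂ) (F : ℂ → ℝ → ℂ)
    (hF : ∀ ρ ∈ t, Continuous (F ρ)) :
    Continuous (fun θ => (t.map fun ρ => F ρ θ).sum) := by
  induction t using Multiset.induction with
  | empty => simpa using continuous_const
  | cons ρ rest ih =>
    simp only [Multiset.map_cons, Multiset.sum_cons]
    exact (hF ρ (Multiset.mem_cons_self _ _)).add
      (ih (fun ρ' h => hF ρ' (Multiset.mem_cons_of_mem h)))

lemma integral_multiset_sum' (t : Multiset ℂ) (F : ℂ → ℝ → ℂ)
    (hF : ∀ ρ ∈ t, Continuous (F ρ)) :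
    (∫ θ in (0:ℝ)..(2*π), (t.map fun ρ => F ρ θ).sum)
      = (t.map fun ρ => ∫ θ in (0:ℝ)..(2*π), F ρ θ).sum := by
  induction t using Multiset.induction with
  | empty => simp
  | cons ρ rest ih =>
    simp only [Multiset.map_cons, Multiset.sum_cons]
    rw [intervalIntegral.integral_add ((hF ρ (Multiset.mem_cons_self _ _)).intervalIntegrable _ _)
      ((multiset_sum_continuous rest F (fun ρ' h => hF ρ' (Multiset.mem_cons_of_mem h))).intervalIntegrable _ _)]
    rw [ih (fun ρ' h => hF ρ' (Multiset.mem_cons_of_mem h))]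

lemma multiset_count_sum (t : Multiset ℂ) (r : ℝ) :
    (t.map fun ρ => if ‖ρ‖ < r then 2 * π * Complex.I else 0).sum
      = ((t.filter fun ρ => ‖ρ‖ < r).card : ℂ) * (2 * π * Complex.I) := by
  induction t using Multiset.induction with
  | empty => simp
  | cons ρ rest ih =>
    simp only [Multiset.map_cons, Multiset.sum_cons, ih]
    by_cases h : ‖ρ‖ < r
    · rw [if_pos h, Multiset.filter_cons_of_pos (p := fun ρ => ‖ρ‖ < r) _ h]
      simp only [Multiset.card_cons]
      push_cast
      ring
    · rw [if_neg h, Multiset.filter_cons_of_neg (p := fun ρ => ‖ρ‖ < r) _ h]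
      ring

lemma wind_eq_count (s : Finset ι) (m : ι → ℤ) (B : ι → ℂ) (N : ℕ)
    (hN : ∀ i ∈ s, 0 ≤ m i + N) (σ : ℝ)
    (hP : PP s m B N ≠ 0)
    (hloop : ∀ θ : ℝ, G s m (fun i => B i * Complex.exp ((σ : ℂ) * (m i : ℂ))) θ ≠ 0) :
    wind s m (fun i => B i * Complex.exp ((σ : ℂ) * (m i : ℂ)))
      = 2 * π * Complex.I *
        ((((PP s m B N).roots.filter (fun ρ => ‖ρ‖ < Real.exp σ)).card : ℂ) - N) := by
  set a : ι → ℂ := fun i => B i * Complex.exp ((σ : ℂ) * (m i : ℂ)) with ha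
  set u : ℝ → ℂ := fun θ => Complex.exp ((σ:ℂ) + θ * Complex.I) with hu
  set P : Polynomial ℂ := PP s m B N with hPdef
  have hune : ∀ θ, u θ ≠ 0 := fun θ => Complex.exp_ne_zero _
  have habs : ∀ θ : ℝ, ‖u θ‖ = Real.exp σ := by
    intro θ; rw [hu]; simp [Complex.norm_exp]
  have h0 : ∀ θ : ℝ, HasDerivAt (fun t : ℝ => ((t : ℝ) : ℂ)) 1 θ := by
    intro θ; simpa using (hasDerivAt_id θ).ofReal_comp
  have hud : ∀ θ : ℝ, HasDerivAt u (Complex.I * u θ) θ := by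
    intro θ
    have h1 : HasDerivAt (fun t : ℝ => (σ:ℂ) + (t:ℂ) * Complex.I) (1 * Complex.I) θ :=
      (((h0 θ)).mul_const _).const_add _
    have h3 := h1.cexp
    rw [hu]; convert h3 using 1; ring
  have hGL : ∀ θ, G s m a θ = LL s m B (u θ) := fun θ => G_eq_LL s m B σ θ
  -- no roots on the circle
  have hrc : ∀ ρ ∈ P.roots, ‖ρ‖ ≠ Real.exp σ := by
    intro ρ hρ heq
    have hρ0 : ρ ≠ 0 := by
      intro h; rw [h] at heq; simp at heq; exact absurd heq.symm (ne_of_gt (Real.exp_pos σ))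
    have hev : P.eval ρ = 0 := (Polynomial.mem_roots hP).mp hρ
    have hLL : LL s m B ρ = 0 := by
      rw [PP_eval s m B N hN hρ0] at hev
      exact (mul_eq_zero.mp hev).resolve_left (pow_ne_zero _ hρ0)
    have hρu : u ρ.arg = ρ := by
      rw [hu]
      simp only
      rw [Complex.exp_add, ← Complex.ofReal_exp, ← heq, Complex.norm_mul_exp_arg_mul_I]
    exact hloop ρ.arg (by rw [hGL, hρu, hLL])
  have hsub : ∀ (θ : ℝ), ∀ ρ ∈ P.roots, u θ - ρ ≠ 0 := by
    intro θ ρ hρ h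
    exact hrc ρ hρ (by rw [← sub_eq_zero.mp h, habs θ])
  -- factorization
  have hfact : P = Polynomial.C P.leadingCoeff * (P.roots.map fun ρ => Polynomial.X - Polynomial.C ρ).prod :=
    ((IsAlgClosed.splits P).eq_prod_roots)
  have heval : ∀ q : ℂ, P.eval q = P.leadingCoeff * (P.roots.map fun ρ => q - ρ).prod := by
    intro q
    conv_lhs => rw [hfact]
    rw [Polynomial.eval_mul, Polynomial.eval_C, Polynomial.eval_multiset_prod, Multiset.map_map]
    simp [Function.comp_def]
  -- pointwise integrand identity
  set v : ℝ → ℂ := fun θ => Complex.exp ((N:ℂ) * ((σ:ℂ) + θ * Complex.I)) with hv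
  have hvne : ∀ θ, v θ ≠ 0 := fun θ => Complex.exp_ne_zero _
  have hvu : ∀ θ, v θ = (u θ)^(N:ℕ) := by
    intro θ
    rw [hv, hu]
    simp only
    rw [← Complex.exp_nat_mul]
  have hvd : ∀ θ : ℝ, HasDerivAt v ((N:ℂ) * Complex.I * v θ) θ := by
    intro θ
    have h1 : HasDerivAt (fun t : ℝ => ((σ:ℂ) + (t:ℂ) * Complex.I) * (N:ℂ))
        (1 * Complex.I * (N:ℂ)) θ := (((h0 θ).mul_const _).const_add _).mul_const _
    have h3 := h1.cexp
    have hfeq : v = fun t : ℝ => Complex.exp (((σ:ℂ) + (t:ℂ) * Complex.I) * (N:ℂ)) := by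
      funext t
      rw [hv]
      simp only
      rw [mul_comm]
    rw [hfeq]
    convert h3 using 1
    simp only
    ring
  have hintegrand : ∀ θ : ℝ, Gd s m a θ / G s m a θ
      = (P.roots.map fun ρ => Complex.I * u θ / (u θ - ρ)).sum - (N : ℂ) * Complex.I := by
    intro θ
    have hfun : (fun θ => G s m a θ * v θ) = fun θ =>
        P.leadingCoeff * (P.roots.map fun ρ => u θ - ρ).prod := by
      funext θ'
      rw [hGL θ', ← heval (u θ'), PP_eval s m B N hN (hune θ'), hvu θ']
      ring
    have d1 : HasDerivAt (fun θ => G s m a θ * v θ)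
        (Gd s m a θ * v θ + G s m a θ * ((N:ℂ) * Complex.I * v θ)) θ :=
      (hasDerivAt_G s m a θ).mul (hvd θ)
    have d2 : HasDerivAt (fun θ => P.leadingCoeff * (P.roots.map fun ρ => u θ - ρ).prod)
        (P.leadingCoeff * ((P.roots.map fun ρ => u θ - ρ).prod *
          (P.roots.map fun ρ => (Complex.I * u θ) / (u θ - ρ)).sum)) θ :=
      (multiset_prod_hasDerivAt' u (Complex.I * u θ) (hud θ) P.roots (hsub θ)).const_mul _
    rw [hfun] at d1
    have huniq := d1.unique d2
    have hprod : P.leadingCoeff * (P.roots.map fun ρ => u θ - ρ).prod = G s m a θ * v θ := by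
      rw [← heval (u θ), PP_eval s m B N hN (hune θ), hGL θ, hvu θ]; ring
    have hcanc : Gd s m a θ = G s m a θ * (P.roots.map fun ρ => (Complex.I * u θ) / (u θ - ρ)).sum
        - G s m a θ * ((N:ℂ) * Complex.I) := by
      refine mul_right_cancel₀ (hvne θ) ?_
      linear_combination huniq + ((P.roots.map fun ρ => (Complex.I * u θ) / (u θ - ρ)).sum) * hprod
    rw [hcanc]
    field_simp [hloop θ]
  -- integrate
  have hcontF : ∀ ρ ∈ P.roots, Continuous (fun θ => Complex.I * u θ / (u θ - ρ)) := by
    intro ρ hρ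
    apply Continuous.div
    · exact continuous_const.mul (Complex.continuous_exp.comp (by fun_prop))
    · exact (Complex.continuous_exp.comp (by fun_prop)).sub continuous_const
    · exact fun θ => hsub θ ρ hρ
  have : wind s m a = ∫ θ in (0:ℝ)..(2*π),
      ((P.roots.map fun ρ => Complex.I * u θ / (u θ - ρ)).sum - (N : ℂ) * Complex.I) := by
    unfold wind
    congr 1
    funext θ
    exact hintegrand θ
  rw [this]
  rw [intervalIntegral.integral_sub
    ((multiset_sum_continuous P.roots _ hcontF).intervalIntegrable _ _)
    (intervalIntegrable_const)]
  rw [integral_multiset_sum' P.roots _ hcontF]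
  have hmap : (P.roots.map fun ρ => ∫ θ in (0:ℝ)..(2*π), Complex.I * u θ / (u θ - ρ))
      = P.roots.map fun ρ => if ‖ρ‖ < Real.exp σ then 2 * π * Complex.I else 0 := by
    apply Multiset.map_congr rfl
    intro ρ hρ
    exact per_root σ ρ (hrc ρ hρ)
  rw [hmap, multiset_count_sum]
  rw [intervalIntegral.integral_const]
  rw [Complex.real_smul]
  push_cast
  ring

lemma no_zeros_annulus (s : Finset ι) (m : ι → ℤ) (B : ι → ℂ) (N : ℕ)
    (hN : ∀ i ∈ s, 0 ≤ m i + N) (lam : ℝ) (hlam : 0 ≤ lam)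
    (hP : PP s m B N ≠ 0)
    (hloop0 : ∀ θ : ℝ, G s m (fun i => B i * Complex.exp (((0:ℝ) : ℂ) * (m i : ℂ))) θ ≠ 0)
    (hloop1 : ∀ θ : ℝ, G s m (fun i => B i * Complex.exp (((lam:ℝ) : ℂ) * (m i : ℂ))) θ ≠ 0)
    (hwind : wind s m (fun i => B i * Complex.exp (((0:ℝ) : ℂ) * (m i : ℂ)))
      = wind s m (fun i => B i * Complex.exp (((lam:ℝ) : ℂ) * (m i : ℂ))))
    (q : ℂ) (hq1 : 1 ≤ ‖q‖) (hq2 : ‖q‖ ≤ Real.exp lam) :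
    LL s m B q ≠ 0 := by
  intro hLL
  have hq0 : q ≠ 0 := by
    intro h; rw [h] at hq1; simp at hq1; linarith
  have hroot : q ∈ (PP s m B N).roots := by
    rw [Polynomial.mem_roots hP]
    show (PP s m B N).eval q = 0
    rw [PP_eval s m B N hN hq0, hLL, mul_zero]
  -- absolute value is not 1 nor exp lam
  have habs_ne : ∀ σ : ℝ, ‖q‖ = Real.exp σ →
      (∀ θ : ℝ, G s m (fun i => B i * Complex.exp ((σ : ℂ) * (m i : ℂ))) θ ≠ 0) → False := by
    intro σ hqe hloop
    apply hloop q.arg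
    rw [G_eq_LL]
    have : Complex.exp ((σ:ℂ) + q.arg * Complex.I) = q := by
      rw [Complex.exp_add, ← Complex.ofReal_exp, ← hqe, Complex.norm_mul_exp_arg_mul_I]
    rw [this, hLL]
  have h1 : ‖q‖ ≠ 1 := by
    intro h
    exact habs_ne 0 (by rw [h, Real.exp_zero]) hloop0
  have h2 : ‖q‖ ≠ Real.exp lam := fun h => habs_ne lam h hloop1
  have hq1' : 1 < ‖q‖ := lt_of_le_of_ne hq1 (Ne.symm h1)
  have hq2' : ‖q‖ < Real.exp lam := lt_of_le_of_ne hq2 h2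
  -- counts
  have hc0 := wind_eq_count s m B N hN 0 hP hloop0
  have hc1 := wind_eq_count s m B N hN lam hP hloop1
  rw [hc0, hc1] at hwind
  have h2πI : (2 * (π:ℂ) * Complex.I) ≠ 0 := by
    simp [Real.pi_ne_zero, Complex.I_ne_zero]
  have hcards : (((PP s m B N).roots.filter (fun ρ => ‖ρ‖ < Real.exp 0)).card : ℂ)
      = (((PP s m B N).roots.filter (fun ρ => ‖ρ‖ < Real.exp lam)).card : ℂ) := by
    have := mul_left_cancel₀ h2πI hwind
    linear_combination this
  have hcards' : ((PP s m B N).roots.filter (fun ρ => ‖ρ‖ < Real.exp 0)).card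
      = ((PP s m B N).roots.filter (fun ρ => ‖ρ‖ < Real.exp lam)).card := by
    exact_mod_cast hcards
  have hle : ((PP s m B N).roots.filter (fun ρ => ‖ρ‖ < Real.exp 0))
      ≤ ((PP s m B N).roots.filter (fun ρ => ‖ρ‖ < Real.exp lam)) := by
    apply Multiset.monotone_filter_right
    intro ρ hρ
    calc ‖ρ‖ < Real.exp 0 := hρ
      _ ≤ Real.exp lam := Real.exp_le_exp.mpr hlam
  have heq := Multiset.eq_of_le_of_card_le hle (le_of_eq hcards'.symm)
  have hqin : q ∈ (PP s m B N).roots.filter (fun ρ => ‖ρ‖ < Real.exp lam) := by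
    rw [Multiset.mem_filter]
    exact ⟨hroot, hq2'⟩
  rw [← heq] at hqin
  rw [Multiset.mem_filter] at hqin
  rw [Real.exp_zero] at hqin
  linarith [hqin.2]

lemma zpow_finset_sum {q : ℂ} (hq : q ≠ 0) {β : Type*} (s : Finset β) (e : β → ℤ) :
    q ^ (∑ j ∈ s, e j) = ∏ j ∈ s, q ^ e j := by
  classical
  induction s using Finset.induction with
  | empty => simp
  | insert a t h ih => rw [Finset.sum_insert h, Finset.prod_insert h, zpow_add₀ hq, ih]

lemma rexp_zpow (c : ℝ) (j : ℤ) : Real.exp c ^ j = Real.exp (j * c) := by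
  rw [← Real.rpow_intCast, Real.rpow_def_of_pos (Real.exp_pos c), Real.log_exp, mul_comm]

/-- The master evaluation identity. -/
lemma G_eval (n : ℕ) (f : MvPolynomial (Fin n) ℂ) (k : Fin n → ℤ) (c : Fin n → ℂ) (θ : ℝ) :
    G f.support (fun α => ∑ j, k j * (α j : ℤ))
      (fun α => MvPolynomial.coeff α f * ∏ j, (c j) ^ (α j)) θ
      = MvPolynomial.eval (fun j => c j * Complex.exp ((k j : ℂ) * (θ * Complex.I))) f := by
  rw [MvPolynomial.eval_eq']
  unfold G
  refine Finset.sum_congr rfl fun α _ => ?_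
  rw [mul_assoc]
  congr 1
  rw [Finset.prod_congr rfl (fun j _ => mul_pow (c j) _ (α j)), Finset.prod_mul_distrib]
  congr 1
  simp only [← Complex.exp_nat_mul]
  rw [← Complex.exp_sum]
  congr 1
  push_cast
  rw [Finset.sum_mul]
  refine Finset.sum_congr rfl fun j _ => ?_
  ring

lemma segment_avoids (n : ℕ) (f : MvPolynomial (Fin n) ℂ)
    (A : Set (Fin n → ℝ))
    (hA : A = {x : Fin n → ℝ | ∃ z : Fin n → ℂ, (∀ i, z i ≠ 0) ∧
      MvPolynomial.eval z f = 0 ∧ ∀ i, x i = Real.log ‖z i‖})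
    (E : Set (Fin n → ℝ)) (hE : IsPathConnected E) (hEA : E ⊆ Aᶜ)
    (u v : Fin n → ℝ) (hu : u ∈ E) (hv : v ∈ E)
    (k : Fin n → ℤ) (lam : ℝ) (hlam : 0 ≤ lam)
    (hvu : ∀ j, v j = u j + lam * (k j : ℝ))
    (τ : ℝ) (hτ0 : 0 ≤ τ) (hτ1 : τ ≤ 1) :
    (fun j => u j + τ * lam * (k j : ℝ)) ∉ A := by
  intro hw
  rw [hA] at hw
  obtain ⟨z, hz1, hz2, hz3⟩ := hw
  set m : (Fin n →₀ ℕ) → ℤ := fun α => ∑ j, k j * (α j : ℤ) with hm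
  have hzabs : ∀ j, ‖z j‖ = Real.exp (u j + τ * lam * (k j : ℝ)) := by
    intro j
    have h := hz3 j
    simp only at h
    rw [h, Real.exp_log (norm_pos_iff.mpr (hz1 j))]
  set q : ℝ := Real.exp (τ * lam) with hq
  have hqpos : 0 < q := Real.exp_pos _
  have hqC0 : ((q:ℂ)) ≠ 0 := by exact_mod_cast ne_of_gt hqpos
  set b : Fin n → ℂ := fun j => z j * (q:ℂ) ^ (-(k j)) with hb
  have hb0 : ∀ j, b j ≠ 0 := fun j => mul_ne_zero (hz1 j) (zpow_ne_zero _ hqC0)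
  have hzb : ∀ j, b j * (q:ℂ) ^ (k j) = z j := by
    intro j
    rw [hb]
    simp only
    rw [mul_assoc, ← zpow_add₀ hqC0]
    simp
  have hbabs : ∀ j, ‖b j‖ = Real.exp (u j) := by
    intro j
    rw [hb]
    simp only
    rw [norm_mul, norm_zpow, Complex.norm_real, Real.norm_of_nonneg hqpos.le, hzabs j, hq, rexp_zpow,
      ← Real.exp_add]
    congr 1
    push_cast
    ring
  set B : (Fin n →₀ ℕ) → ℂ := fun α => MvPolynomial.coeff α f * ∏ j, (b j) ^ (α j) with hB
  set N : ℕ := f.support.sup (fun α => (-(m α)).toNat) with hNdef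
  have hN : ∀ α ∈ f.support, 0 ≤ m α + N := by
    intro α hα
    have h1 : ((-(m α)).toNat : ℤ) ≤ (N : ℤ) := by
      exact_mod_cast Finset.le_sup (f := fun α => (-(m α)).toNat) hα
    have h2 : -(m α) ≤ ((-(m α)).toNat : ℤ) := Int.self_le_toNat _
    omega
  -- the path and the parameter family
  obtain ⟨γ, hγ⟩ := hE.joinedIn u hu v hv
  set c : unitInterval → (Fin n →₀ ℕ) → ℂ := fun t α => MvPolynomial.coeff α f *
    ∏ j, (b j * Complex.exp (((γ t j - u j : ℝ) : ℂ))) ^ (α j) with hc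
  have hcc : Continuous c := by
    rw [hc]
    apply continuous_pi
    intro α
    apply continuous_const.mul
    apply continuous_finset_prod
    intro j _
    apply Continuous.pow
    apply continuous_const.mul
    exact Complex.continuous_exp.comp (Complex.continuous_ofReal.comp
      (((continuous_apply j).comp γ.continuous).sub continuous_const))
  have hGt : ∀ (t : unitInterval) (θ : ℝ), G f.support m (c t) θ =
      MvPolynomial.eval (fun j => (b j * Complex.exp (((γ t j - u j : ℝ) : ℂ))) *
        Complex.exp ((k j : ℂ) * (θ * Complex.I))) f := by
    intro t θ
    exact G_eval n f k (fun j => b j * Complex.exp (((γ t j - u j : ℝ) : ℂ))) θ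
  have hloopt : ∀ (t : unitInterval) (θ : ℝ), G f.support m (c t) θ ≠ 0 := by
    intro t θ h0
    apply hEA (hγ t)
    rw [hA]
    refine ⟨fun j => (b j * Complex.exp (((γ t j - u j : ℝ) : ℂ))) *
        Complex.exp ((k j : ℂ) * (θ * Complex.I)), fun j => ?_, by rw [← hGt t θ]; exact h0,
        fun j => ?_⟩
    · exact mul_ne_zero (mul_ne_zero (hb0 j) (Complex.exp_ne_zero _)) (Complex.exp_ne_zero _)
    · rw [norm_mul, norm_mul, Complex.norm_exp, Complex.norm_exp, hbabs j]
      have hre1 : (((γ t j - u j : ℝ) : ℂ)).re = γ t j - u j := by simp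
      have hre2 : ((k j : ℂ) * (θ * Complex.I)).re = 0 := by simp
      rw [hre1, hre2, Real.exp_zero, mul_one, ← Real.exp_add]
      rw [Real.log_exp]
      ring
  have hc0 : c 0 = fun α => B α * Complex.exp (((0:ℝ) : ℂ) * (m α : ℂ)) := by
    funext α
    rw [hc, hB]
    simp only [γ.source]
    rw [Complex.ofReal_zero, zero_mul, Complex.exp_zero, mul_one]
    congr 1
    refine Finset.prod_congr rfl fun j _ => ?_
    rw [show u j - u j = (0:ℝ) by ring]
    rw [Complex.ofReal_zero, Complex.exp_zero, mul_one]
  have hc1 : c 1 = fun α => B α * Complex.exp (((lam:ℝ) : ℂ) * (m α : ℂ)) := by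
    funext α
    rw [hc, hB]
    simp only [γ.target]
    rw [mul_assoc]
    congr 1
    have : ∀ j, v j - u j = lam * (k j : ℝ) := fun j => by rw [hvu j]; ring
    simp only [this]
    rw [Finset.prod_congr rfl (fun j _ => mul_pow (b j) _ (α j)), Finset.prod_mul_distrib]
    congr 1
    simp only [← Complex.exp_nat_mul]
    rw [← Complex.exp_sum]
    congr 1
    rw [hm]
    simp only
    push_cast
    rw [Finset.mul_sum]
    refine Finset.sum_congr rfl fun j _ => ?_
    ring
  have hwind : wind f.support m (fun α => B α * Complex.exp (((0:ℝ) : ℂ) * (m α : ℂ)))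
      = wind f.support m (fun α => B α * Complex.exp (((lam:ℝ) : ℂ) * (m α : ℂ))) := by
    rw [← hc0, ← hc1]
    exact wind_const f.support m c hcc hloopt 0 1
  -- P ≠ 0
  have hLL1 : LL f.support m B 1 = MvPolynomial.eval b f := by
    unfold LL
    rw [MvPolynomial.eval_eq']
    refine Finset.sum_congr rfl fun α _ => ?_
    rw [one_zpow, mul_one, hB]
  have hevalb : MvPolynomial.eval b f ≠ 0 := by
    intro h0
    apply hEA hu
    rw [hA]
    exact ⟨b, hb0, h0, fun j => by rw [hbabs j, Real.log_exp]⟩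
  have hPne : PP f.support m B N ≠ 0 := by
    intro h0
    have := PP_eval f.support m B N hN (q := 1) one_ne_zero
    rw [h0] at this
    simp only [Polynomial.eval_zero, one_pow, one_mul] at this
    rw [hLL1] at this
    exact hevalb this.symm
  -- conclude
  have hfin := no_zeros_annulus f.support m B N hN lam hlam hPne
    (fun θ => by rw [← hc0]; exact hloopt 0 θ)
    (fun θ => by rw [← hc1]; exact hloopt 1 θ)
    hwind (q:ℂ)
    (by rw [Complex.norm_real, Real.norm_of_nonneg hqpos.le, hq]
        calc (1:ℝ) = Real.exp 0 := by rw [Real.exp_zero]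
          _ ≤ Real.exp (τ * lam) := Real.exp_le_exp.mpr (by positivity))
    (by rw [Complex.norm_real, Real.norm_of_nonneg hqpos.le, hq]
        exact Real.exp_le_exp.mpr (by nlinarith))
  apply hfin
  unfold LL
  rw [show (0:ℂ) = MvPolynomial.eval z f from hz2.symm, MvPolynomial.eval_eq']
  refine Finset.sum_congr rfl fun α _ => ?_
  rw [hB]
  simp only
  rw [mul_assoc]
  congr 1
  rw [hm]
  simp only
  rw [zpow_finset_sum hqC0 Finset.univ (fun j => k j * (α j : ℤ))]
  rw [← Finset.prod_mul_distrib]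
  refine Finset.prod_congr rfl fun j _ => ?_
  rw [← hzb j, mul_pow]
  congr 1
  rw [zpow_mul, zpow_natCast]
  simp only [hb, ← mul_pow]

lemma amoeba_isClosed (n : ℕ) (f : MvPolynomial (Fin n) ℂ) :
    IsClosed {x : Fin n → ℝ | ∃ z : Fin n → ℂ, (∀ i, z i ≠ 0) ∧
      MvPolynomial.eval z f = 0 ∧ ∀ i, x i = Real.log ‖z i‖} := by
  rw [← isSeqClosed_iff_isClosed]
  intro xs x hxs hlim
  choose z hz1 hz2 hz3 using hxs
  -- bound
  have hnorm : Filter.Tendsto (fun kk => ‖xs kk‖) Filter.atTop (nhds ‖x‖) :=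
    (continuous_norm.continuousAt.tendsto).comp hlim
  obtain ⟨M, hM⟩ := hnorm.bddAbove_range
  have habs : ∀ kk i, ‖z kk i‖ = Real.exp (xs kk i) := by
    intro kk i
    rw [hz3 kk i, Real.exp_log (norm_pos_iff.mpr (hz1 kk i))]
  have hzball : ∀ kk, z kk ∈ Metric.closedBall (0 : Fin n → ℂ) (Real.exp M) := by
    intro kk
    rw [Metric.mem_closedBall, dist_zero_right]
    rw [pi_norm_le_iff_of_nonneg (by positivity)]
    intro i
    rw [habs kk i]
    apply Real.exp_le_exp.mpr
    calc xs kk i ≤ |xs kk i| := le_abs_self _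
      _ ≤ ‖xs kk‖ := by
          have := norm_le_pi_norm (xs kk) i
          simpa [Real.norm_eq_abs] using this
      _ ≤ M := hM ⟨kk, rfl⟩
  obtain ⟨w, hwball, φ, hφ, hwt⟩ :=
    (isCompact_closedBall (0 : Fin n → ℂ) (Real.exp M)).tendsto_subseq hzball
  have hxsφ : Filter.Tendsto (fun kk => xs (φ kk)) Filter.atTop (nhds x) :=
    hlim.comp (hφ.tendsto_atTop)
  have hcoord : ∀ i, Filter.Tendsto (fun kk => z (φ kk) i) Filter.atTop (nhds (w i)) :=
    fun i => ((continuous_apply i).continuousAt.tendsto).comp hwt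
  have hwabs : ∀ i, ‖w i‖ = Real.exp (x i) := by
    intro i
    have h1 : Filter.Tendsto (fun kk => ‖z (φ kk) i‖) Filter.atTop
        (nhds (‖w i‖)) :=
      (continuous_norm.continuousAt.tendsto).comp (hcoord i)
    have h2 : Filter.Tendsto (fun kk => ‖z (φ kk) i‖) Filter.atTop
        (nhds (Real.exp (x i))) := by
      have : (fun kk => ‖z (φ kk) i‖) = fun kk => Real.exp (xs (φ kk) i) := by
        funext kk; exact habs (φ kk) i
      rw [this]
      exact (Real.continuous_exp.continuousAt.tendsto).comp
        (((continuous_apply i).continuousAt.tendsto).comp hxsφ)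
    exact tendsto_nhds_unique h1 h2
  have hwne : ∀ i, w i ≠ 0 := by
    intro i h
    have := hwabs i
    rw [h] at this
    simp at this
    exact absurd this.symm (ne_of_gt (Real.exp_pos _))
  have hweval : MvPolynomial.eval w f = 0 := by
    have h1 : Filter.Tendsto (fun kk => MvPolynomial.eval (z (φ kk)) f) Filter.atTop
        (nhds (MvPolynomial.eval w f)) :=
      ((MvPolynomial.continuous_eval (p := f)).continuousAt.tendsto).comp hwt
    have h2 : (fun kk => MvPolynomial.eval (z (φ kk)) f) = fun _ => 0 := by
      funext kk; exact hz2 (φ kk)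
    rw [h2] at h1
    exact tendsto_nhds_unique h1 tendsto_const_nhds
  exact ⟨w, hwne, hweval, fun i => by rw [hwabs i, Real.log_exp]⟩

end AmoebaProof

/-- For a nonzero polynomial `f ∈ ℂ[z₁,…,zₙ]`, `n ≥ 1`, every connected
component of the complement `ℝⁿ ∖ A_f` of the amoeba
`A_f = Log({z ∈ (ℂ∖{0})ⁿ : f(z) = 0})` is a convex subset of `ℝⁿ`. -/
theorem amoeba_complement_components_convex
    (n : ℕ) (hn : 1 ≤ n) (f : MvPolynomial (Fin n) ℂ) (hf : f ≠ 0)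
    (A : Set (Fin n → ℝ))
    (hA : A = {x : Fin n → ℝ | ∃ z : Fin n → ℂ, (∀ i, z i ≠ 0) ∧
      MvPolynomial.eval z f = 0 ∧ ∀ i, x i = Real.log ‖z i‖}) :
    ∀ x ∈ Aᶜ, Convex ℝ (connectedComponentIn Aᶜ x) := by
  intro x hx
  have hAclosed : IsClosed A := by rw [hA]; exact AmoebaProof.amoeba_isClosed n f
  have hAco : IsOpen Aᶜ := hAclosed.isOpen_compl
  set E := connectedComponentIn Aᶜ x with hEdef
  have hEopen : IsOpen E := hAco.connectedComponentIn
  have hEconn : IsConnected E := isConnected_connectedComponentIn_iff.mpr hx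
  have hEpath : IsPathConnected E := (hEopen.isConnected_iff_isPathConnected).mp hEconn
  have hEA : E ⊆ Aᶜ := connectedComponentIn_subset _ _
  have key : ∀ u ∈ E, ∀ v ∈ E, ∀ τ : ℝ, 0 ≤ τ → τ ≤ 1 →
      (fun j => u j + τ * (v j - u j)) ∉ A := by
    intro u hu v hv τ hτ0 hτ1
    obtain ⟨ε, hεpos, hεu⟩ := Metric.isOpen_iff.mp hEopen u hu
    obtain ⟨δ, hδpos, hδv⟩ := Metric.isOpen_iff.mp hEopen v hv
    set ε' : ℝ := min ε δ with hε'
    have hε'pos : 0 < ε' := lt_min hεpos hδpos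
    obtain ⟨M, hM⟩ := exists_nat_gt (1 / ε')
    have hMpos : 0 < (M:ℝ) := lt_trans (by positivity) hM
    have hMinv : 0 < 1/(M:ℝ) := by positivity
    have hinv : 1 / (M:ℝ) < ε' := by
      rw [div_lt_iff₀ hMpos]
      rw [div_lt_iff₀ hε'pos] at hM
      nlinarith
    set k : Fin n → ℤ := fun j => ⌊(M:ℝ) * (v j - u j)⌋ with hk
    set lam : ℝ := 1 / (M:ℝ) with hlam
    have hlamnn : 0 ≤ lam := le_of_lt hMinv
    have happrox : ∀ j, |lam * (k j : ℝ) - (v j - u j)| ≤ 1/(M:ℝ) := by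
      intro j
      have h1 := Int.floor_le ((M:ℝ) * (v j - u j))
      have h2 := Int.lt_floor_add_one ((M:ℝ) * (v j - u j))
      have hcanc : (1/(M:ℝ)) * ((M:ℝ) * (v j - u j)) = v j - u j := by
        field_simp
      rw [abs_le]
      constructor
      · have h3 := mul_le_mul_of_nonneg_left (le_of_lt h2) (le_of_lt hMinv)
        rw [hcanc] at h3
        rw [mul_add, mul_one] at h3
        rw [hlam, hk]
        simp only
        linarith
      · have h3 := mul_le_mul_of_nonneg_left h1 (le_of_lt hMinv)
        rw [hcanc] at h3
        rw [hlam, hk]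
        simp only
        linarith
    set u' : Fin n → ℝ := fun j => u j + τ * ((v j - u j) - lam * (k j : ℝ)) with hu'
    set v' : Fin n → ℝ := fun j => u' j + lam * (k j : ℝ) with hv'
    have hbound : ∀ (w w₀ : Fin n → ℝ), (∀ j, |w j - w₀ j| ≤ 1/(M:ℝ)) → dist w w₀ < ε' := by
      intro w w₀ hww
      rw [dist_pi_lt_iff hε'pos]
      intro j
      rw [Real.dist_eq]
      exact lt_of_le_of_lt (hww j) hinv
    have hu'E : u' ∈ E := by
      apply hεu
      rw [Metric.mem_ball]
      refine lt_of_lt_of_le (hbound u' u fun j => ?_) (min_le_left ε δ)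
      rw [hu']
      simp only
      rw [show u j + τ * ((v j - u j) - lam * (k j:ℝ)) - u j
          = τ * ((v j - u j) - lam * (k j:ℝ)) by ring]
      rw [abs_mul, _root_.abs_of_nonneg hτ0]
      calc τ * |(v j - u j) - lam * (k j:ℝ)|
          ≤ 1 * |(v j - u j) - lam * (k j:ℝ)| :=
            mul_le_mul_of_nonneg_right hτ1 (abs_nonneg _)
        _ = |lam * (k j:ℝ) - (v j - u j)| := by rw [one_mul, abs_sub_comm]
        _ ≤ 1/(M:ℝ) := happrox j
    have hv'E : v' ∈ E := by
      apply hδv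
      rw [Metric.mem_ball]
      refine lt_of_lt_of_le (hbound v' v fun j => ?_) (min_le_right ε δ)
      simp only [hv', hu']
      rw [show u j + τ * ((v j - u j) - lam * (k j:ℝ)) + lam * (k j:ℝ) - v j
          = (1 - τ) * (lam * (k j:ℝ) - (v j - u j)) by ring]
      rw [abs_mul, _root_.abs_of_nonneg (by linarith : (0:ℝ) ≤ 1 - τ)]
      calc (1 - τ) * |lam * (k j:ℝ) - (v j - u j)|
          ≤ 1 * |lam * (k j:ℝ) - (v j - u j)| :=
            mul_le_mul_of_nonneg_right (by linarith) (abs_nonneg _)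
        _ = |lam * (k j:ℝ) - (v j - u j)| := one_mul _
        _ ≤ 1/(M:ℝ) := happrox j
    have hres := AmoebaProof.segment_avoids n f A hA E hEpath hEA u' v' hu'E hv'E k lam hlamnn
      (fun j => rfl) τ hτ0 hτ1
    intro hcontra
    apply hres
    have : (fun j => u' j + τ * lam * (k j : ℝ)) = (fun j => u j + τ * (v j - u j)) := by
      funext j
      rw [hu']
      simp only
      ring
    rw [this]
    exact hcontra
  -- convexity
  intro p hp q hq a bcoef ha hb hab
  have hsub : segment ℝ p q ⊆ Aᶜ := by
    intro w hw
    obtain ⟨a', b', ha', hb', hab', rfl⟩ := hw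
    have hwa : (a' • p + b' • q) = fun j => p j + b' * (q j - p j) := by
      funext j
      simp only [Pi.add_apply, Pi.smul_apply, smul_eq_mul]
      have : a' = 1 - b' := by linarith
      rw [this]; ring
    rw [hwa]
    exact key p hp q hq b' hb' (by linarith)
  have hsegE : segment ℝ p q ⊆ E := by
    have hpre : IsPreconnected (segment ℝ p q) :=
      ((convex_segment p q).isPathConnected ⟨p, left_mem_segment ℝ p q⟩).isConnected.isPreconnected
    have := hpre.subset_connectedComponentIn (left_mem_segment ℝ p q) hsub
    rwa [hEdef, connectedComponentIn_eq hp]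
  exact hsegE ⟨a, bcoef, ha, hb, hab, rfl⟩
end

section
/- Let a ∈ ℂⁿ be nonzero, and let H := {t ∈ ℂⁿ : ∑_{i=1}^n aᵢ tᵢ = 0}, regarded as a real subspace of ℂⁿ ≅ ℝ^{2n}. Then the ℝ-linear map H → ℝⁿ, t ↦ (Re t₁, …, Re tₙ), is surjective if and only if there is no nonzero complex number c with c·a ∈ ℝⁿ (i.e., if and only if a is not a complex scalar multiple of a real vector). -/
/-- Let `a ∈ ℂⁿ` be nonzero and `H = {t ∈ ℂⁿ : ∑ aᵢ tᵢ = 0}`.  The ℝ-linear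
map `H → ℝⁿ`, `t ↦ (Re t₁, …, Re tₙ)` is surjective iff there is no nonzero `c ∈ ℂ` with
`c·a ∈ ℝⁿ`, i.e. iff `a` is not a complex scalar multiple of a real vector. -/
theorem re_surjective_on_hyperplane_iff_not_real_direction
    (n : ℕ) (a : Fin n → ℂ) (ha : a ≠ 0) :
    (∀ x : Fin n → ℝ, ∃ t : Fin n → ℂ,
        (∑ i, a i * t i = 0) ∧ ∀ i, (t i).re = x i)
      ↔ ¬ ∃ c : ℂ, c ≠ 0 ∧ ∀ i, (c * a i).im = 0 := by
  constructor
  · rintro hsurj ⟨c, hc, him⟩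
    obtain ⟨t, hsum, hre⟩ := hsurj (fun k => (c * a k).re)
    have h0 : ∑ k, (c * a k) * t k = 0 := by
      simp only [mul_assoc, ← Finset.mul_sum, hsum, mul_zero]
    have key : ∑ k, (c * a k).re ^ 2 = 0 := by
      have := congrArg Complex.re h0
      simp only [Complex.re_sum, Complex.zero_re] at this
      rw [← this]
      refine Finset.sum_congr rfl fun k _ => ?_
      conv_rhs => rw [Complex.mul_re]
      rw [him k, hre k, sq]
      ring
    have hz : ∀ k, (c * a k).re = 0 := by
      intro k
      have := (Finset.sum_eq_zero_iff_of_nonneg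
        (fun k _ => sq_nonneg ((c * a k).re))).mp key k (Finset.mem_univ k)
      exact (pow_eq_zero_iff two_ne_zero).mp this
    apply ha
    funext k
    have hk : c * a k = 0 := Complex.ext (hz k) (him k)
    rcases mul_eq_zero.mp hk with h | h
    · exact absurd h hc
    · exact h
  · intro hnc x
    -- there exist indices i j with a i, a j ℝ-linearly independent
    have hij : ∃ i j, (a i * (starRingEnd ℂ) (a j)).im ≠ 0 := by
      by_contra h
      push_neg at h
      obtain ⟨k, hk⟩ : ∃ k, a k ≠ 0 := by
        by_contra hall
        push_neg at hall
        exact ha (funext hall)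
      refine hnc ⟨(starRingEnd ℂ) (a k), ?_, fun i => ?_⟩
      · simpa using hk
      · have := h i k
        rwa [mul_comm] at this
    obtain ⟨i, j, hij⟩ := hij
    have hne : i ≠ j := by
      rintro rfl
      apply hij
      rw [Complex.mul_conj]
      simp
    set p := (a i).re with hp
    set q := (a i).im with hq
    set r := (a j).re with hr
    set s := (a j).im with hs
    have hD : p * s - q * r ≠ 0 := by
      intro h
      apply hij
      rw [Complex.mul_im, Complex.conj_re, Complex.conj_im]
      rw [← hp, ← hq, ← hr, ← hs]
      linarith
    set S : ℂ := ∑ k, a k * (x k : ℂ) with hS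
    set D : ℝ := p * s - q * r with hDdef
    set u : ℝ := (s * (-S.im) - r * S.re) / D with hu
    set v : ℝ := (p * S.re - q * (-S.im)) / D with hv
    refine ⟨fun k => (x k : ℂ) + (if k = i then (u : ℂ) else if k = j then (v : ℂ) else 0) * Complex.I,
      ?_, fun k => by by_cases h1 : k = i <;> by_cases h2 : k = j <;> simp [h1, h2, hne, Ne.symm hne]⟩
    have hsum1 : ∑ k, a k * (if k = i then (u : ℂ) else if k = j then (v : ℂ) else 0)
        = a i * u + a j * v := by
      have : ∀ k ∈ Finset.univ, a k * (if k = i then (u : ℂ) else if k = j then (v : ℂ) else 0)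
          = (if k = i then a i * u else 0) + (if k = j then a j * v else 0) := by
        intro k _
        by_cases h1 : k = i
        · subst h1; simp [hne]
        · by_cases h2 : k = j
          · subst h2; simp [Ne.symm hne, h1]
          · simp [h1, h2]
      rw [Finset.sum_congr rfl this, Finset.sum_add_distrib,
        Finset.sum_ite_eq' Finset.univ i, Finset.sum_ite_eq' Finset.univ j]
      simp
    have expand : ∑ k, a k * ((x k : ℂ) +
        (if k = i then (u : ℂ) else if k = j then (v : ℂ) else 0) * Complex.I)
        = S + (a i * u + a j * v) * Complex.I := by
      rw [hS, ← hsum1, Finset.sum_mul, ← Finset.sum_add_distrib]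
      refine Finset.sum_congr rfl fun k _ => ?_
      ring
    rw [expand]
    have hrest : (a i * u + a j * v : ℂ) = -S.im + S.re * Complex.I := by
      apply Complex.ext
      · simp only [Complex.add_re, Complex.mul_re, Complex.ofReal_re, Complex.ofReal_im,
          Complex.neg_re, Complex.mul_im, Complex.I_re, Complex.I_im, Complex.neg_im]
        rw [← hp, ← hq, ← hr, ← hs, hu, hv]
        field_simp
        ring
      · simp only [Complex.add_im, Complex.mul_im, Complex.ofReal_re, Complex.ofReal_im,
          Complex.neg_im, Complex.mul_re, Complex.I_re, Complex.I_im, Complex.neg_re]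
        rw [← hp, ← hq, ← hr, ← hs, hu, hv]
        field_simp
        ring
    rw [hrest]
    apply Complex.ext <;> simp
end

section
/- Let f : ℂⁿ → ℂ be a polynomial, let z₀ ∈ (ℂ∖{0})ⁿ with f(z₀) = 0, and suppose the vector a := (z₀₁·∂f/∂z₁(z₀), …, z₀ₙ·∂f/∂zₙ(z₀)) is nonzero. Let T := {t ∈ ℂⁿ : ∑_{i=1}^n ∂f/∂zᵢ(z₀)·tᵢ = 0}, regarded as a real subspace of ℂⁿ, and let DLog(z₀) : ℂⁿ → ℝⁿ denote the real Fréchet derivative at z₀ of the map Log(z) = (log|z₁|, …, log|zₙ|). Then DLog(z₀) maps T onto ℝⁿ if and only if there is no nonzero complex number c with c·a ∈ ℝⁿ. Equivalently: z₀ is a critical point of the restriction of Log to the smooth hypersurface V*(f) if and only if the logarithmic Gauss image γ_f(z₀) = (z₀₁∂f/∂z₁(z₀) : … : z₀ₙ∂f/∂zₙ(z₀)) is a real point of ℙ^{n−1}. -/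
open MvPolynomial

lemma hasFDerivAt_log_abs (p : ℂ) (hp : p ≠ 0) :
    HasFDerivAt (fun w : ℂ => Real.log ‖w‖)
      (Complex.reCLM.comp (p⁻¹ • ContinuousLinearMap.id ℝ ℂ)) p := by
  have hre : HasFDerivAt (fun w : ℂ => w.re) Complex.reCLM p :=
    Complex.reCLM.hasFDerivAt
  have him : HasFDerivAt (fun w : ℂ => w.im) Complex.imCLM p :=
    Complex.imCLM.hasFDerivAt
  have hns : HasFDerivAt (fun w : ℂ => Complex.normSq w)
      (p.re • Complex.reCLM + p.re • Complex.reCLM +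
        (p.im • Complex.imCLM + p.im • Complex.imCLM)) p := by
    have := (hre.mul hre).add (him.mul him)
    refine this.congr_of_eventuallyEq (Filter.Eventually.of_forall fun w => ?_)
    simp [Complex.normSq_apply]
  have hns0 : Complex.normSq p ≠ 0 := by
    simpa [Complex.normSq_eq_zero] using hp
  have hlog := (hns.log hns0).const_smul (2⁻¹ : ℝ)
  have heq : (fun w : ℂ => Real.log ‖w‖)
      = fun w : ℂ => (2⁻¹ : ℝ) • Real.log (Complex.normSq w) := by
    funext w
    rw [Complex.norm_def, Real.log_sqrt (Complex.normSq_nonneg w)]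
    simp
    ring
  rw [heq]
  refine (hlog.congr_of_eventuallyEq (Filter.Eventually.of_forall fun w => rfl)).congr_fderiv (Eq.symm ?_)
  refine ContinuousLinearMap.ext fun t => ?_
  simp only [ContinuousLinearMap.coe_comp', Function.comp_apply,
    ContinuousLinearMap.smul_apply, ContinuousLinearMap.coe_id', id_eq,
    Complex.reCLM_apply, ContinuousLinearMap.add_apply, Complex.imCLM_apply,
    smul_eq_mul, Complex.mul_re, Complex.inv_re, Complex.inv_im,
    Complex.normSq_apply]
  have h2 : p.re * p.re + p.im * p.im ≠ 0 := by
    simpa [Complex.normSq_apply] using hns0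
  field_simp
  ring

/-- Let `f` be a polynomial, `z₀ ∈ (ℂ∖{0})ⁿ` with `f(z₀) = 0` and
`a = (z₀ᵢ ∂f/∂zᵢ(z₀))ᵢ ≠ 0`.  Let `T = ker(df(z₀))` be the complex tangent space and let
`D = DLog(z₀)` be the real Fréchet derivative at `z₀` of `Log z = (log|z₁|,…,log|zₙ|)`.
Then `D` maps `T` onto `ℝⁿ` iff there is no nonzero `c ∈ ℂ` with `c·a ∈ ℝⁿ`; i.e. `z₀` is a
critical point of `Log|_{V*(f)}` iff the logarithmic Gauss image `γ_f(z₀)` is real. -/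
theorem log_critical_iff_gauss_real
    (n : ℕ) (f : MvPolynomial (Fin n) ℂ) (z₀ : Fin n → ℂ)
    (hz₀ : ∀ i, z₀ i ≠ 0) (hf : eval z₀ f = 0)
    (a : Fin n → ℂ) (haDef : a = fun i => z₀ i * eval z₀ (pderiv i f)) (ha : a ≠ 0)
    (T : Set (Fin n → ℂ))
    (hT : T = {t : Fin n → ℂ | ∑ i, eval z₀ (pderiv i f) * t i = 0})
    (D : (Fin n → ℂ) →L[ℝ] (Fin n → ℝ))
    (hD : HasFDerivAt (fun z : Fin n → ℂ => fun i => Real.log ‖z i‖) D z₀) :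
    ⇑D '' T = Set.univ ↔ ¬ ∃ c : ℂ, c ≠ 0 ∧ ∀ i, (c * a i).im = 0 := by
  -- Identify D explicitly
  set D' : (Fin n → ℂ) →L[ℝ] (Fin n → ℝ) :=
    ContinuousLinearMap.pi (fun i =>
      (Complex.reCLM.comp ((z₀ i)⁻¹ • ContinuousLinearMap.id ℝ ℂ)).comp
        (ContinuousLinearMap.proj i)) with hD'def
  have hD' : HasFDerivAt (fun z : Fin n → ℂ => fun i => Real.log ‖z i‖) D' z₀ := by
    apply hasFDerivAt_pi'.2
    intro i
    have hproj : HasFDerivAt (fun z : Fin n → ℂ => z i)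
        (ContinuousLinearMap.proj i : (Fin n → ℂ) →L[ℝ] ℂ) z₀ :=
      (ContinuousLinearMap.proj i : (Fin n → ℂ) →L[ℝ] ℂ).hasFDerivAt
    have := (hasFDerivAt_log_abs (z₀ i) (hz₀ i)).comp z₀ hproj
    rw [hD'def, ContinuousLinearMap.proj_pi]
    exact this
  have hDeq : D = D' := hD.unique hD'
  have hDform : ∀ t i, D t i = ((z₀ i)⁻¹ * t i).re := by
    intro t i
    rw [hDeq, hD'def]
    simp [smul_eq_mul]
  clear hD hD' hf
  clear_value D'
  clear hD'def hDeq D'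
  constructor
  · -- surjective → no real Gauss image
    intro hsurj
    rintro ⟨c, hc, hcre⟩
    -- find i₀ with (c * a i₀).re ≠ 0
    obtain ⟨i₀, hi₀⟩ : ∃ i₀, (c * a i₀).re ≠ 0 := by
      by_contra h
      push_neg at h
      apply ha
      funext i
      have : c * a i = 0 := Complex.ext (h i) (hcre i)
      rcases mul_eq_zero.1 this with h' | h'
      · exact absurd h' hc
      · simpa using h'
    have hx : (Pi.single i₀ 1 : Fin n → ℝ) ∈ ⇑D '' T := by
      rw [hsurj]; trivial
    obtain ⟨t, htT, hDt⟩ := hx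
    rw [hT] at htT
    have hs : ∑ i, c * a i * ((z₀ i)⁻¹ * t i) = 0 := by
      have key : ∀ i ∈ Finset.univ, c * a i * ((z₀ i)⁻¹ * t i)
          = c * (eval z₀ (pderiv i f) * t i) := by
        intro i _
        rw [haDef]
        have := hz₀ i
        field_simp
      rw [Finset.sum_congr rfl key, ← Finset.mul_sum, htT, mul_zero]
    have hre : ∑ i, (c * a i).re * ((z₀ i)⁻¹ * t i).re = 0 := by
      have := congrArg Complex.re hs
      rw [Complex.re_sum] at this
      simp only [Complex.zero_re] at this
      rw [← this]
      apply Finset.sum_congr rfl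
      intro i _
      rw [Complex.mul_re (c * a i) ((z₀ i)⁻¹ * t i), hcre i]
      ring
    have hfin : ∑ i, (c * a i).re * (Pi.single i₀ 1 : Fin n → ℝ) i = 0 := by
      rw [← hDt]
      calc ∑ i, (c * a i).re * D t i = ∑ i, (c * a i).re * ((z₀ i)⁻¹ * t i).re := by
            apply Finset.sum_congr rfl; intro i _; rw [hDform]
        _ = 0 := hre
    apply hi₀
    calc (c * a i₀).re = ∑ i, (c * a i).re * (Pi.single i₀ 1 : Fin n → ℝ) i := by
          rw [Finset.sum_eq_single i₀]
          · simp
          · intro i _ hi; simp [Pi.single_apply, hi]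
          · intro h; exact absurd (Finset.mem_univ i₀) h
      _ = 0 := hfin
  · -- no real Gauss image → surjective
    intro hno
    rw [Set.eq_univ_iff_forall]
    intro x
    obtain ⟨j, hj⟩ : ∃ j, a j ≠ 0 := by
      by_contra h
      push_neg at h
      exact ha (funext h)
    obtain ⟨k, hk⟩ : ∃ k, ((a j)⁻¹ * a k).im ≠ 0 := by
      by_contra h
      push_neg at h
      exact hno ⟨(a j)⁻¹, inv_ne_zero hj, h⟩
    have hjk : k ≠ j := by
      intro h
      apply hk
      rw [h, inv_mul_cancel₀ hj]
      simp
    set b : ℂ := ∑ i, a i * (x i : ℂ) with hb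
    set w : ℂ := Complex.I * b with hw
    set q' : ℝ := ((a j)⁻¹ * a k).im with hq'
    set p' : ℝ := ((a j)⁻¹ * a k).re with hp'
    set p : ℝ := ((a j)⁻¹ * w).re with hp
    set q : ℝ := ((a j)⁻¹ * w).im with hq
    set yj : ℝ := p - q * p' / q' with hyj
    set yk : ℝ := q / q' with hyk
    set y : Fin n → ℝ := fun m => (if m = j then yj else 0) + (if m = k then yk else 0) with hy
    have hyw : ∑ i, a i * (y i : ℂ) = w := by
      have hsum : ∑ i, a i * (y i : ℂ) = a j * yj + a k * yk := by
        have : ∀ i, a i * (y i : ℂ)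
            = (if i = j then a i * yj else 0) + (if i = k then a i * yk else 0) := by
          intro i
          simp only [hy]
          by_cases h1 : i = j
          · have h2 : ¬ i = k := fun h => hjk (h ▸ h1)
            simp [h1, h2, Ne.symm hjk]
          · by_cases h2 : i = k
            · simp [h1, h2, hjk]
            · simp [h1, h2]
        rw [Finset.sum_congr rfl (fun i _ => this i), Finset.sum_add_distrib,
          Finset.sum_ite_eq' Finset.univ j (fun i => a i * (yj : ℂ)),
          Finset.sum_ite_eq' Finset.univ k (fun i => a i * (yk : ℂ))]
        simp
      rw [hsum]
      have key : (yj : ℂ) + ((a j)⁻¹ * a k) * yk = (a j)⁻¹ * w := by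
        apply Complex.ext
        · simp only [Complex.add_re, Complex.ofReal_re, Complex.mul_re,
            Complex.ofReal_im, mul_zero, sub_zero, ← hp', ← hq', ← hp]
          rw [hyj, hyk]
          field_simp
          ring
        · simp only [Complex.add_im, Complex.ofReal_im, Complex.mul_im,
            Complex.ofReal_re, mul_zero, zero_add, ← hq', ← hq]
          rw [hyk]
          field_simp
      calc a j * (yj : ℂ) + a k * (yk : ℂ)
          = a j * ((yj : ℂ) + ((a j)⁻¹ * a k) * (yk : ℂ)) := by
            field_simp
        _ = a j * ((a j)⁻¹ * w) := by rw [key]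
        _ = w := by field_simp
    -- now define t
    refine ⟨fun i => z₀ i * ((x i : ℂ) + (y i : ℂ) * Complex.I), ?_, ?_⟩
    · rw [hT]
      show ∑ i, eval z₀ (pderiv i f) * (z₀ i * ((x i : ℂ) + (y i : ℂ) * Complex.I)) = 0
      have : ∀ i, eval z₀ (pderiv i f) * (z₀ i * ((x i : ℂ) + (y i : ℂ) * Complex.I))
          = a i * (x i : ℂ) + (a i * (y i : ℂ)) * Complex.I := by
        intro i
        rw [haDef]
        ring
      rw [Finset.sum_congr rfl (fun i _ => this i), Finset.sum_add_distrib,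
        ← Finset.sum_mul, hyw, ← hb, hw]
      calc b + Complex.I * b * Complex.I = (Complex.I * Complex.I) * b + b := by ring
        _ = 0 := by rw [Complex.I_mul_I]; ring
    · funext i
      rw [hDform]
      have : (z₀ i)⁻¹ * (z₀ i * ((x i : ℂ) + (y i : ℂ) * Complex.I))
          = (x i : ℂ) + (y i : ℂ) * Complex.I := by
        rw [← mul_assoc, inv_mul_cancel₀ (hz₀ i), one_mul]
      rw [this]
      simp
end

section
/- Let f : ℂⁿ → ℂ be a polynomial, let z₀ ∈ (ℂ∖{0})ⁿ with f(z₀) = 0 and ∂f/∂zₙ(z₀) ≠ 0. Let U be an open neighbourhood of z₀' := (z₀₁,…,z₀,n−1) in ℂ^{n−1} and let g : U → ℂ∖{0} be a holomorphic function with g(z₀') = z₀ₙ and f(z', g(z')) = 0 for all z' ∈ U. Then for every y ∈ ℂⁿ the following are equivalent: (i) yᵢ/z₀ᵢ + yₙ·(∂g/∂zᵢ(z₀'))/g(z₀') = 0 for all i = 1,…,n−1; (ii) yₙ·z₀ᵢ·∂f/∂zᵢ(z₀) = yᵢ·z₀ₙ·∂f/∂zₙ(z₀) for all i = 1,…,n−1.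 In other words, z₀ is a critical point of the phase function φ_y(z) = ⟨y, log z⟩ restricted to V*(f) if and only if (z₀, y) lies on the graph of the logarithmic Gauss map, i.e. γ_f(z₀) = (y₁ : … : yₙ). -/
open MvPolynomial

open ContinuousLinearMap


lemma mv_hasFDerivAt {m : ℕ} (p : MvPolynomial (Fin m) ℂ) (x : Fin m → ℂ) :
    HasFDerivAt (fun z => eval z p)
      (∑ j, eval x (pderiv j p) • (proj j : (Fin m → ℂ) →L[ℂ] ℂ)) x := by
  induction p using MvPolynomial.induction_on with
  | C a =>
      have h0 : (∑ j, eval x (pderiv j (C a : MvPolynomial (Fin m) ℂ)) •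
          (proj j : (Fin m → ℂ) →L[ℂ] ℂ)) = 0 := by
        ext v
        simp
      rw [h0]
      simp only [eval_C]
      exact hasFDerivAt_const a x
  | add p q hp hq =>
      have := hp.add hq
      refine HasFDerivAt.congr_fderiv (this.congr_of_eventuallyEq (Filter.Eventually.of_forall fun z => ?_)) ?_
      · simp
      · ext v; simp [add_mul, Finset.sum_add_distrib]
  | mul_X p j hp =>
      have hj : HasFDerivAt (fun z : Fin m → ℂ => z j)
          (proj j : (Fin m → ℂ) →L[ℂ] ℂ) x := by
        exact hasFDerivAt_apply j x
      have := hp.mul hj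
      refine HasFDerivAt.congr_fderiv (this.congr_of_eventuallyEq (Filter.Eventually.of_forall fun z => ?_)) ?_
      · simp
      · ext v
        have key : ∀ i : Fin m, eval x (pderiv i (p * X j)) * v i
            = eval x (pderiv i p) * v i * x j + (if j = i then eval x p * v i else 0) := by
          intro i
          simp only [pderiv_mul, pderiv_X, map_add, map_mul, eval_X, Pi.single_apply]
          split <;> simp <;> ring
        simp only [coe_sum', Finset.sum_apply, smul_apply, smul_eq_mul, add_apply, proj_apply,
          coe_smul', Pi.smul_apply]
        rw [Finset.sum_congr rfl (fun i _ => key i), Finset.sum_add_distrib]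
        simp only [Finset.sum_ite_eq, Finset.mem_univ, if_true, Finset.mul_sum]
        rw [add_comm]
        congr 1
        exact Finset.sum_congr rfl fun i _ => by ring

lemma div_add_div_eq_zero_iff (a b c d : ℂ) (hb : b ≠ 0) (hd : d ≠ 0) :
    a / b + c / d = 0 ↔ a * d + c * b = 0 := by
  rw [div_add_div _ _ hb hd, div_eq_iff (mul_ne_zero hb hd), zero_mul]
  constructor <;> intro h <;> linear_combination h

lemma implicit_key
    (n : ℕ) (f : MvPolynomial (Fin (n + 1)) ℂ) (z₀ : Fin (n + 1) → ℂ)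
    (z₀' : Fin n → ℂ) (hz₀' : z₀' = fun i => z₀ i.castSucc)
    (U : Set (Fin n → ℂ)) (hU : IsOpen U) (hmem : z₀' ∈ U)
    (g : (Fin n → ℂ) → ℂ) (hg : DifferentiableOn ℂ g U)
    (hgz₀ : g z₀' = z₀ (Fin.last n))
    (himpl : ∀ z' ∈ U, eval (Fin.snoc z' (g z')) f = 0) (i : Fin n) :
    eval z₀ (pderiv i.castSucc f)
      + eval z₀ (pderiv (Fin.last n) f) * fderiv ℂ g z₀' (Pi.single i 1) = 0 := by
  have hga : DifferentiableAt ℂ g z₀' := hg.differentiableAt (hU.mem_nhds hmem)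
  have hgd : HasFDerivAt g (fderiv ℂ g z₀') z₀' := hga.hasFDerivAt
  set LS : (Fin n → ℂ) →L[ℂ] (Fin (n + 1) → ℂ) :=
    ContinuousLinearMap.pi (fun j =>
      Fin.lastCases (fderiv ℂ g z₀') (fun k => (proj k : (Fin n → ℂ) →L[ℂ] ℂ)) j) with hLS
  have hS : HasFDerivAt (fun z' => Fin.snoc z' (g z') : (Fin n → ℂ) → Fin (n + 1) → ℂ)
      LS z₀' := by
    refine hasFDerivAt_pi'.2 fun j => ?_
    induction j using Fin.lastCases with
    | last =>
        simp only [Fin.snoc_last, hLS, proj_pi, Fin.lastCases_last]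
        exact hgd
    | cast k =>
        simp only [Fin.snoc_castSucc, hLS, proj_pi, Fin.lastCases_castSucc]
        exact hasFDerivAt_apply k z₀'
  have hzeq : Fin.snoc z₀' (g z₀') = z₀ := by
    funext j
    induction j using Fin.lastCases with
    | last => simp [hgz₀]
    | cast k => simp [hz₀']
  have hcomp := (mv_hasFDerivAt f (Fin.snoc z₀' (g z₀'))).comp z₀' hS
  have hzero : HasFDerivAt (fun z' => eval (Fin.snoc z' (g z')) f)
      (0 : (Fin n → ℂ) →L[ℂ] ℂ) z₀' := by
    have hev : (fun z' => eval (Fin.snoc z' (g z')) f) =ᶠ[nhds z₀'] fun _ => (0 : ℂ) :=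
      Filter.eventuallyEq_of_mem (hU.mem_nhds hmem) himpl
    exact (hasFDerivAt_const (0 : ℂ) z₀').congr_of_eventuallyEq hev
  have huniq : ((∑ j, eval (Fin.snoc z₀' (g z₀')) (pderiv j f) •
      (proj j : (Fin (n + 1) → ℂ) →L[ℂ] ℂ)).comp LS) = 0 := hcomp.unique hzero
  have happ := congrFun (congrArg DFunLike.coe huniq) (Pi.single i 1)
  rw [hzeq] at happ
  simp only [comp_apply, coe_sum', Finset.sum_apply, smul_apply, proj_apply, smul_eq_mul,
    zero_apply, hLS, pi_apply] at happ
  rw [Fin.sum_univ_castSucc] at happ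
  simp only [Fin.lastCases_last, Fin.lastCases_castSucc, proj_apply, Pi.single_apply] at happ
  rw [Finset.sum_congr rfl (fun k _ => by
      rw [show eval z₀ (pderiv k.castSucc f) * (if k = i then (1:ℂ) else 0)
        = if k = i then eval z₀ (pderiv k.castSucc f) else 0 by split <;> simp]),
    Finset.sum_ite_eq' Finset.univ i (fun k => eval z₀ (pderiv k.castSucc f))] at happ
  simpa using happ

/-- Let `f` be a polynomial in `n+1` variables, `z₀` a point of the torus with
`f(z₀) = 0` and `∂f/∂z_{n+1}(z₀) ≠ 0`, and let `g` be a holomorphic implicit function on a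
neighbourhood `U` of `z₀' = (z₀₁,…,z₀ₙ)` with values in `ℂ∖{0}`, `g(z₀') = z₀_{n+1}` and
`f(z', g(z')) = 0` on `U`.  Then for every `y ∈ ℂ^{n+1}` the following are equivalent:
(i) `yᵢ/z₀ᵢ + y_{n+1}·(∂g/∂zᵢ(z₀'))/g(z₀') = 0` for all `i ≤ n`;
(ii) `y_{n+1}·z₀ᵢ·∂f/∂zᵢ(z₀) = yᵢ·z₀_{n+1}·∂f/∂z_{n+1}(z₀)` for all `i ≤ n`.
I.e. `z₀` is a critical point of the phase function `φ_y = ⟨y, log z⟩` on `V*(f)` iff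
`(z₀, y)` lies on the graph of the logarithmic Gauss map. -/
theorem phase_critical_iff_gauss_graph
    (n : ℕ) (f : MvPolynomial (Fin (n + 1)) ℂ) (z₀ : Fin (n + 1) → ℂ)
    (hz₀ : ∀ i, z₀ i ≠ 0) (hf : eval z₀ f = 0)
    (hfn : eval z₀ (pderiv (Fin.last n) f) ≠ 0)
    (z₀' : Fin n → ℂ) (hz₀' : z₀' = fun i => z₀ i.castSucc)
    (U : Set (Fin n → ℂ)) (hU : IsOpen U) (hmem : z₀' ∈ U)
    (g : (Fin n → ℂ) → ℂ) (hg : DifferentiableOn ℂ g U)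
    (hgne : ∀ z' ∈ U, g z' ≠ 0) (hgz₀ : g z₀' = z₀ (Fin.last n))
    (himpl : ∀ z' ∈ U, eval (Fin.snoc z' (g z')) f = 0)
    (y : Fin (n + 1) → ℂ) :
    (∀ i : Fin n,
        y i.castSucc / z₀ i.castSucc
          + y (Fin.last n) * fderiv ℂ g z₀' (Pi.single i 1) / g z₀' = 0)
      ↔ (∀ i : Fin n,
        y (Fin.last n) * z₀ i.castSucc * eval z₀ (pderiv i.castSucc f)
          = y i.castSucc * z₀ (Fin.last n) * eval z₀ (pderiv (Fin.last n) f)) := by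
  refine forall_congr' fun i => ?_
  have hk := implicit_key n f z₀ z₀' hz₀' U hU hmem g hg hgz₀ himpl i
  set Fn := eval z₀ (pderiv (Fin.last n) f) with hFn
  set Fi := eval z₀ (pderiv i.castSucc f) with hFi
  set Di := fderiv ℂ g z₀' (Pi.single i 1) with hDi
  rw [hgz₀, div_add_div_eq_zero_iff _ _ _ _ (hz₀ i.castSucc) (hz₀ (Fin.last n))]
  constructor
  · intro h
    linear_combination (-Fn) * h + (y (Fin.last n) * z₀ i.castSucc) * hk
  · intro h
    have h2 : Fn * (y i.castSucc * z₀ (Fin.last n) + y (Fin.last n) * Di * z₀ i.castSucc)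
        = Fn * 0 := by
      linear_combination -h + (y (Fin.last n) * z₀ i.castSucc) * hk
    exact mul_left_cancel₀ hfn h2
end

section
/- Let f : ℂⁿ → ℂ be a polynomial, z₀ ∈ (ℂ∖{0})ⁿ with f(z₀) = 0 and ∂f/∂zₙ(z₀) ≠ 0, let g be a holomorphic function on a neighbourhood of z₀' := (z₀₁,…,z₀,n−1) with values in ℂ∖{0}, g(z₀') = z₀ₙ and f(z', g(z')) ≡ 0. Let y ∈ ℂⁿ satisfy the criticality condition yᵢ/z₀ᵢ = −yₙ·(∂g/∂zᵢ(z₀'))/g(z₀') for all i = 1,…,n−1. Define Lᵢⱼ := (g(z₀')·∂²g/∂zᵢ∂zⱼ(z₀') − ∂g/∂zᵢ(z₀')·∂g/∂zⱼ(z₀'))/g(z₀')² (the second logarithmic derivatives of g). Then the (n−1)×(n−1) matrices H with entries Hᵢⱼ := yₙ·Lᵢⱼ − δᵢⱼ·yᵢ/z₀ᵢ² (the Hessian of the phase function φ_y at z₀) and J with entries Jᵢⱼ := −(z₀ᵢ·Lᵢⱼ + δᵢⱼ·(∂g/∂zⱼ(z₀'))/g(z₀')) (the Jacobian matrix of the logarithmic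 Gauss map in the affine chart) satisfy H = D·J, where D is the invertible diagonal matrix with diagonal entries dᵢ = −yₙ/z₀ᵢ (assuming yₙ ≠ 0). -/
open MvPolynomial

/-- Under the implicit-function setup for `V*(f)` near `z₀`
(`f(z₀) = 0`, `∂f/∂z_{n+1}(z₀) ≠ 0`, `g` holomorphic with `f(z', g(z')) ≡ 0`), and the
criticality condition `yᵢ/z₀ᵢ = −y_{n+1}·gᵢ(z₀')/g(z₀')`, with
`Lᵢⱼ = (g·gᵢⱼ − gᵢ·gⱼ)/g²` the second logarithmic derivatives of `g`, the Hessian matrix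
`Hᵢⱼ = y_{n+1}·Lᵢⱼ − δᵢⱼ·yᵢ/z₀ᵢ²` of the phase function `φ_y` at `z₀` and the Jacobian matrix
`Jᵢⱼ = −(z₀ᵢ·Lᵢⱼ + δᵢⱼ·gⱼ/g)` of the logarithmic Gauss map in the affine chart satisfy
`H = D·J` with `D` the invertible diagonal matrix with entries `dᵢ = −y_{n+1}/z₀ᵢ`
(assuming `y_{n+1} ≠ 0`). -/
theorem hessian_eq_diagonal_mul_jacobian
    (n : ℕ) (f : MvPolynomial (Fin (n + 1)) ℂ) (z₀ : Fin (n + 1) → ℂ)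
    (hz₀ : ∀ i, z₀ i ≠ 0) (hf : eval z₀ f = 0)
    (hfn : eval z₀ (pderiv (Fin.last n) f) ≠ 0)
    (z₀' : Fin n → ℂ) (hz₀' : z₀' = fun i => z₀ i.castSucc)
    (U : Set (Fin n → ℂ)) (hU : IsOpen U) (hmem : z₀' ∈ U)
    (g : (Fin n → ℂ) → ℂ) (hg : DifferentiableOn ℂ g U)
    (hgne : ∀ z' ∈ U, g z' ≠ 0) (hgz₀ : g z₀' = z₀ (Fin.last n))
    (himpl : ∀ z' ∈ U, eval (Fin.snoc z' (g z')) f = 0)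
    (y : Fin (n + 1) → ℂ) (hyn : y (Fin.last n) ≠ 0)
    (gd : Fin n → ℂ) (hgd : gd = fun i => fderiv ℂ g z₀' (Pi.single i 1))
    (gdd : Fin n → Fin n → ℂ)
    (hgdd : gdd = fun i j =>
      fderiv ℂ (fun w => fderiv ℂ g w (Pi.single j 1)) z₀' (Pi.single i 1))
    (hcrit : ∀ i : Fin n,
      y i.castSucc / z₀ i.castSucc = -(y (Fin.last n)) * gd i / g z₀')
    (L : Fin n → Fin n → ℂ)
    (hL : L = fun i j => (g z₀' * gdd i j - gd i * gd j) / (g z₀') ^ 2)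
    (H : Matrix (Fin n) (Fin n) ℂ)
    (hH : H = Matrix.of fun i j =>
      y (Fin.last n) * L i j
        - (if i = j then y i.castSucc / (z₀ i.castSucc) ^ 2 else 0))
    (J : Matrix (Fin n) (Fin n) ℂ)
    (hJ : J = Matrix.of fun i j =>
      -(z₀ i.castSucc * L i j + (if i = j then gd j / g z₀' else 0)))
    (D : Matrix (Fin n) (Fin n) ℂ)
    (hD : D = Matrix.diagonal fun i => -(y (Fin.last n)) / z₀ i.castSucc) :
    H = D * J ∧ IsUnit D.det := by
  have hgz : g z₀' ≠ 0 := hgne z₀' hmem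
  constructor
  · ext i j
    have hzi : z₀ i.castSucc ≠ 0 := hz₀ _
    simp only [hH, hJ, hD, Matrix.diagonal_mul, Matrix.of_apply]
    split_ifs with hij
    · subst hij
      have hc := hcrit i
      have hy : y i.castSucc = -(y (Fin.last n)) * gd i / g z₀' * z₀ i.castSucc := by
        field_simp at hc ⊢
        linear_combination hc
      rw [hy]
      field_simp
      ring
    · field_simp
      ring
  · rw [hD, Matrix.det_diagonal]
    exact isUnit_iff_ne_zero.mpr (Finset.prod_ne_zero_iff.mpr fun i _ =>
      div_ne_zero (neg_ne_zero.mpr hyn) (hz₀ _))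
end

section
/- Let a ∈ ℂ with a ≠ 1/27, and let f(z₁,z₂) = z₁²z₂ + z₁z₂² − z₁z₂ + a. Then the curve V*(f) is smooth in the torus: there is no point (z₁,z₂) ∈ (ℂ∖{0})² with f(z₁,z₂) = 0, ∂f/∂z₁(z₁,z₂) = 0 and ∂f/∂z₂(z₁,z₂) = 0. -/
/-- For `a ∈ ℂ`, `a ≠ 1/27`, the curve
`f(z₁,z₂) = z₁²z₂ + z₁z₂² − z₁z₂ + a` is smooth in the torus: there is no point of
`(ℂ∖{0})²` where `f` and both partial derivatives `∂f/∂z₁`, `∂f/∂z₂` vanish. -/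
theorem example_cubic_smooth_in_torus (a : ℂ) (ha : a ≠ 1 / 27) :
    ¬ ∃ z₁ z₂ : ℂ, z₁ ≠ 0 ∧ z₂ ≠ 0 ∧
      z₁ ^ 2 * z₂ + z₁ * z₂ ^ 2 - z₁ * z₂ + a = 0 ∧
      deriv (fun w : ℂ => w ^ 2 * z₂ + w * z₂ ^ 2 - w * z₂ + a) z₁ = 0 ∧
      deriv (fun w : ℂ => z₁ ^ 2 * w + z₁ * w ^ 2 - z₁ * w + a) z₂ = 0 := by
  rintro ⟨z₁, z₂, h1, h2, hf, hd1, hd2⟩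
  have D1 : HasDerivAt (fun w : ℂ => w ^ 2 * z₂ + w * z₂ ^ 2 - w * z₂ + a)
      (2 * z₁ * z₂ + z₂ ^ 2 - z₂) z₁ := by
    have := ((((hasDerivAt_pow 2 z₁).mul_const z₂).add
        ((hasDerivAt_id z₁).mul_const (z₂ ^ 2))).sub
        ((hasDerivAt_id z₁).mul_const z₂)).add_const a
    exact this.congr_deriv (by ring)
  have D2 : HasDerivAt (fun w : ℂ => z₁ ^ 2 * w + z₁ * w ^ 2 - z₁ * w + a)
      (z₁ ^ 2 + 2 * z₁ * z₂ - z₁) z₂ := by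
    have := ((((hasDerivAt_id z₂).const_mul (z₁ ^ 2)).add
        (((hasDerivAt_pow 2 z₂)).const_mul z₁)).sub
        ((hasDerivAt_id z₂).const_mul z₁)).add_const a
    exact this.congr_deriv (by ring)
  rw [D1.deriv] at hd1
  rw [D2.deriv] at hd2
  -- from hd1: z₂ * (2z₁ + z₂ - 1) = 0, z₂ ≠ 0 ⇒ 2z₁ + z₂ = 1
  have e1 : 2 * z₁ + z₂ - 1 = 0 := by
    have : z₂ * (2 * z₁ + z₂ - 1) = 0 := by linear_combination hd1
    rcases mul_eq_zero.mp this with h | h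
    · exact absurd h h2
    · exact h
  have e2 : z₁ + 2 * z₂ - 1 = 0 := by
    have : z₁ * (z₁ + 2 * z₂ - 1) = 0 := by linear_combination hd2
    rcases mul_eq_zero.mp this with h | h
    · exact absurd h h1
    · exact h
  have hz1 : z₁ = 1 / 3 := by linear_combination (2 * e1 - e2) / 3
  have hz2 : z₂ = 1 / 3 := by linear_combination (2 * e2 - e1) / 3
  apply ha
  subst hz1 hz2
  linear_combination hf
end

section
/- For a real parameter a, let D_a(λ) = 4aλ⁶ − 12aλ⁵ + (1−3a)λ⁴ − 2(1−13a)λ³ + (1−3a)λ² − 12aλ + 4a ∈ ℝ[λ]. Then: (i) if a < 0, every complex root of D_a is real, i.e. D_a has six real roots counted with multiplicity; (ii) if 0 < a < 1/27 or a > 1/27, then D_a has no real roots. -/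
/-- If `w = u + iv` with `v ≠ 0` is a root of the real cubic
`2s X³ + (e−3s) X² − (3s+e) X + 2s` with `s > 0`, we get a contradiction:
the cubic takes value `2s > 0` at `0` and `−2s < 0` at `1`, forcing its unique
real root to be both negative and greater than `1`. -/
lemma cubic_key (s u v e : ℝ) (hs : 0 < s) (hv : v ≠ 0)
    (E1 : 2*s*(3*u^2 - v^2) + 2*(e - 3*s)*u - (3*s + e) = 0)
    (E2 : 2*s*u*(u^2 - 3*v^2) + (e - 3*s)*(u^2 - v^2) - (3*s + e)*u + 2*s = 0) :
    False := by
  set T : ℝ := -(e - 3*s) - 4*s*u with hT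
  have hA : (u^2 + v^2) * T + 2*s = 0 := by linear_combination E2 - u * E1
  have hB : ((1-u)^2 + v^2) * (2*s - T) + 2*s = 0 := by linear_combination (u-1) * E1 - E2
  have h1 : 0 < u^2 + v^2 := by positivity
  have h2 : 0 < (1-u)^2 + v^2 := by positivity
  have hTn : T < 0 := by nlinarith
  have h3 : 0 < 2*s - T := by linarith
  nlinarith [mul_pos h2 h3]

/-- A nonreal complex root of `b·(w+1)(w−2)(2w−1) + e·(w²−w)` with `b > 0` is impossible. -/
lemma cubic_complex (b : ℝ) (e : ℝ) (hb : 0 < b) (w : ℂ)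
    (h : (b:ℂ) * ((w+1)*(w-2)*(2*w-1)) + (e:ℂ) * (w^2 - w) = 0) (hv : w.im ≠ 0) :
    False := by
  set u := w.re with hu
  set v := w.im with hvd
  have hre := congrArg Complex.re h
  have him := congrArg Complex.im h
  simp only [Complex.add_re, Complex.add_im, Complex.sub_re, Complex.sub_im,
    Complex.mul_re, Complex.mul_im, Complex.ofReal_re, Complex.ofReal_im,
    Complex.one_re, Complex.one_im, Complex.zero_re, Complex.zero_im,
    Complex.re_ofNat, Complex.im_ofNat, pow_two, ← hu, ← hvd] at hre him
  have E1 : 2*b*(3*u^2 - v^2) + 2*(e - 3*b)*u - (3*b + e) = 0 := by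
    apply mul_left_cancel₀ hv
    linear_combination him
  have E2 : 2*b*u*(u^2 - 3*v^2) + (e - 3*b)*(u^2 - v^2) - (3*b + e)*u + 2*b = 0 := by
    linear_combination hre
  exact cubic_key b u v e hb hv E1 E2

/-- For a real parameter `a` let
`D_a(λ) = 4aλ⁶ − 12aλ⁵ + (1−3a)λ⁴ − 2(1−13a)λ³ + (1−3a)λ² − 12aλ + 4a`.  Then:
(i) if `a < 0`, every complex root of `D_a` is real;
(ii) if `0 < a < 1/27` or `a > 1/27`, then `D_a` has no real roots. -/
theorem discriminant_sextic_real_roots (a : ℝ) :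
    (a < 0 → ∀ w : ℂ,
      4 * (a : ℂ) * w ^ 6 - 12 * (a : ℂ) * w ^ 5 + (1 - 3 * (a : ℂ)) * w ^ 4
          - 2 * (1 - 13 * (a : ℂ)) * w ^ 3 + (1 - 3 * (a : ℂ)) * w ^ 2
          - 12 * (a : ℂ) * w + 4 * (a : ℂ) = 0 → w.im = 0) ∧
    (((0 < a ∧ a < 1 / 27) ∨ 1 / 27 < a) → ∀ x : ℝ,
      4 * a * x ^ 6 - 12 * a * x ^ 5 + (1 - 3 * a) * x ^ 4
          - 2 * (1 - 13 * a) * x ^ 3 + (1 - 3 * a) * x ^ 2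
          - 12 * a * x + 4 * a ≠ 0) := by
  constructor
  · -- (i)
    intro ha w hw
    by_contra hv
    set b : ℝ := Real.sqrt (-a) with hbdef
    have hb : 0 < b := Real.sqrt_pos.2 (by linarith)
    have hb2 : b^2 = -a := Real.sq_sqrt (by linarith)
    have hb2' : ((b:ℂ))^2 = -(a:ℂ) := by
      rw [← Complex.ofReal_pow, hb2]; push_cast; ring
    have hfac : ((w^2 - w) - (b:ℂ) * ((w+1)*(w-2)*(2*w-1)))
        * ((w^2 - w) + (b:ℂ) * ((w+1)*(w-2)*(2*w-1))) = 0 := by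
      linear_combination hw - (((w:ℂ)+1)*(w-2)*(2*w-1))^2 * hb2'
    rcases mul_eq_zero.1 hfac with h | h
    · exact cubic_complex b (-1) hb w (by push_cast; linear_combination -h) hv
    · exact cubic_complex b 1 hb w (by push_cast; linear_combination h) hv
  · -- (ii)
    intro hA x hx
    have ha : 0 < a := by rcases hA with ⟨h, _⟩ | h <;> linarith
    have key : (x^2 - x)^2 + a * ((x+1)*(x-2)*(2*x-1))^2 = 0 := by
      linear_combination hx
    have h1 : (0:ℝ) ≤ (x^2 - x)^2 := sq_nonneg _
    have h2 : (0:ℝ) ≤ ((x+1)*(x-2)*(2*x-1))^2 := sq_nonneg _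
    have h3 : a * ((x+1)*(x-2)*(2*x-1))^2 = 0 := by nlinarith
    have h4 : ((x+1)*(x-2)*(2*x-1))^2 = 0 := by
      rcases mul_eq_zero.1 h3 with h | h
      · exact absurd h (ne_of_gt ha)
      · exact h
    have e2 : (x+1)*(x-2)*(2*x-1) = 0 := by
      exact pow_eq_zero_iff (n := 2) (by norm_num) |>.1 h4
    have e1 : x^2 - x = 0 := by
      have : (x^2 - x)^2 = 0 := by linarith
      exact pow_eq_zero_iff (n := 2) (by norm_num) |>.1 this
    have hx2 : -4*x + 2 = 0 := by linear_combination e2 - (2*x - 1) * e1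
    have : x = 1/2 := by linarith
    rw [this] at e1
    norm_num at e1
end

section
/- Let f(z₁,z₂) = z₁²z₂ + z₁z₂² − z₁z₂ + a with real parameter a, and let A_f ⊆ ℝ² be its amoeba. If 0 < a < 1/27, then ℝ² ∖ A_f has a nonempty bounded connected component; if a > 1/27, then every nonempty connected component of ℝ² ∖ A_f is unbounded. -/
open Complex

noncomputable def Complex.abs : AbsoluteValue ℂ ℝ := IsAbsoluteValue.toAbsoluteValue (norm : ℂ → ℝ)

theorem Complex.abs_apply (z : ℂ) : Complex.abs z = ‖z‖ := rfl

theorem Complex.abs_ofReal (r : ℝ) : Complex.abs (r : ℂ) = |r| := by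
  rw [Complex.abs_apply, Complex.norm_real, Real.norm_eq_abs]

theorem Complex.abs_exp_ofReal_mul_I (x : ℝ) : Complex.abs (Complex.exp (x * I)) = 1 := by
  rw [Complex.abs_apply, Complex.norm_exp_ofReal_mul_I]

theorem Complex.abs_I : Complex.abs I = 1 := by
  rw [Complex.abs_apply, Complex.norm_I]

theorem Complex.abs_conj (z : ℂ) : Complex.abs ((starRingEnd ℂ) z) = Complex.abs z := by
  rw [Complex.abs_apply, Complex.abs_apply, Complex.norm_conj]

theorem Complex.abs_mul_exp_arg_mul_I (x : ℂ) :
    (Complex.abs x : ℂ) * Complex.exp (Complex.arg x * I) = x := by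
  rw [Complex.abs_apply, Complex.norm_mul_exp_arg_mul_I]

theorem Complex.abs_exp_sub_one_le {x : ℂ} (hx : Complex.abs x ≤ 1) :
    Complex.abs (Complex.exp x - 1) ≤ 2 * Complex.abs x := by
  rw [Complex.abs_apply] at hx ⊢
  rw [Complex.abs_apply]
  exact Complex.norm_exp_sub_one_le hx


noncomputable def Fq (a : ℝ) (z w : ℂ) : ℂ := z ^ 2 * w + z * w ^ 2 - z * w + (a : ℝ)


lemma fq_symm (a : ℝ) (z w : ℂ) : Fq a z w = Fq a w z := by unfold Fq; ring

lemma fq_fac (a : ℝ) {w : ℂ} (hw : w ≠ 0) :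
    ∃ u v : ℂ, ∀ z, Fq a z w = w * (z - u) * (z - v) := by
  obtain ⟨e, he⟩ := IsAlgClosed.exists_pow_nat_eq ((w ^ 2 - w) ^ 2 - 4 * w * (a : ℂ)) (n := 2)
    (by norm_num)
  set u := ((w - w ^ 2) + e) / (2 * w) with hu
  set v := ((w - w ^ 2) - e) / (2 * w) with hv
  have hsum : u + v = (w - w ^ 2) / w := by rw [hu, hv]; field_simp; ring
  have hprod : u * v = (a : ℂ) / w := by
    rw [hu, hv]
    rw [div_mul_div_comm]
    rw [div_eq_div_iff (by simp [hw]) hw]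
    linear_combination (-(w:ℂ)) * he
  refine ⟨u, v, fun z => ?_⟩
  have : w * (z - u) * (z - v) = w * (z ^ 2 - (u + v) * z + u * v) := by ring
  rw [this, hsum, hprod]
  unfold Fq
  field_simp
  ring

lemma fq_root_bound {a r₂ : ℝ} (ha : 0 < a) (h2 : 0 < r₂) {z w : ℂ}
    (hw1 : r₂ / 2 ≤ Complex.abs w) (hw2 : Complex.abs w ≤ 2 * r₂) (hz : Fq a z w = 0) :
    Complex.abs z ≤ (4 * r₂ ^ 2 + 2 * r₂ + a) * 2 / r₂ + 1 := by
  set t := Complex.abs z with ht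
  set ww := Complex.abs w with hww
  have ht0 : 0 ≤ t := Complex.abs.nonneg z
  have h : z ^ 2 * w = -(z * w ^ 2) + z * w + -(a : ℂ) := by
    have : Fq a z w = 0 := hz
    unfold Fq at this; linear_combination this
  have habs : t ^ 2 * ww ≤ t * ww ^ 2 + t * ww + a := by
    have h1 : Complex.abs (z ^ 2 * w) ≤ Complex.abs (z * w ^ 2) + Complex.abs (z * w)
        + Complex.abs ((a : ℝ) : ℂ) := by
      rw [h]
      refine le_trans (Complex.abs.add_le _ _) ?_
      gcongr
      · refine le_trans (Complex.abs.add_le _ _) ?_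
        simp
      · simp
    simpa [map_mul, map_pow, Complex.abs_ofReal, abs_of_pos ha, ← ht, ← hww] using h1
  rcases le_or_gt t 1 with h1 | h1
  · have : 0 ≤ (4 * r₂ ^ 2 + 2 * r₂ + a) * 2 / r₂ := by positivity
    linarith
  · have key : t - 1 ≤ (4 * r₂ ^ 2 + 2 * r₂ + a) * 2 / r₂ := by
      rw [le_div_iff₀ h2]
      nlinarith [mul_le_mul_of_nonneg_left hw1 (sq_nonneg t),
        mul_le_mul_of_nonneg_left hw2 ht0, sq_nonneg ww, mul_pos h2 h2]
    linarith

lemma lemA {a r₁ r₂ : ℝ} (ha : 0 < a) (h1 : 0 < r₁) (h2 : 0 < r₂)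
    (hfree : ∀ z w : ℂ, Complex.abs z = r₁ → Complex.abs w = r₂ → Fq a z w ≠ 0)
    (hbase : ∀ z : ℂ, Fq a z (r₂ : ℂ) = 0 → Complex.abs z < r₁) :
    ∀ z w : ℂ, Complex.abs w = r₂ → Fq a z w = 0 → Complex.abs z < r₁ := by
  set R : ℝ := (4 * r₂ ^ 2 + 2 * r₂ + a) * 2 / r₂ + 1 with hRdef
  have hR : 0 < R := by positivity
  set L : ℝ := R ^ 2 + R * (4 * r₂) + R with hLdef
  have hL : 0 < L := by positivity
  set W : ℝ → ℂ := fun θ => (r₂ : ℂ) * Complex.exp (θ * I) with hWdef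
  have hWabs : ∀ θ : ℝ, Complex.abs (W θ) = r₂ := by
    intro θ
    simp [hWdef, map_mul, Complex.abs_exp_ofReal_mul_I, Complex.abs_ofReal, abs_of_pos h2]
  have hWne : ∀ θ : ℝ, W θ ≠ 0 := by
    intro θ h
    have := hWabs θ
    rw [h] at this
    simp at this
    linarith
  have hWlip : ∀ θ θ' : ℝ, |θ' - θ| ≤ 1 → Complex.abs (W θ' - W θ) ≤ 2 * r₂ * |θ' - θ| := by
    intro θ θ' hd
    have hsplit : ((θ' : ℂ)) * I = (θ : ℂ) * I + ((θ' - θ : ℝ) : ℂ) * I := by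
      push_cast; ring
    have hfac : W θ' - W θ = W θ * (Complex.exp (((θ' - θ : ℝ) : ℂ) * I) - 1) := by
      rw [hWdef]
      simp only []
      rw [hsplit, Complex.exp_add]
      ring
    rw [hfac, map_mul, hWabs]
    have habs : Complex.abs (((θ' - θ : ℝ) : ℂ) * I) = |θ' - θ| := by
      rw [map_mul, Complex.abs_I, Complex.abs_ofReal, mul_one]
    have hle := Complex.abs_exp_sub_one_le (x := ((θ' - θ : ℝ) : ℂ) * I) (by rw [habs]; exact hd)
    rw [habs] at hle
    calc r₂ * Complex.abs (Complex.exp (((θ' - θ : ℝ) : ℂ) * I) - 1) ≤ r₂ * (2 * |θ' - θ|) :=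
          mul_le_mul_of_nonneg_left hle h2.le
      _ = 2 * r₂ * |θ' - θ| := by ring
  have hRb : ∀ (z : ℂ) (θ : ℝ), Fq a z (W θ) = 0 → Complex.abs z ≤ R := by
    intro z θ hz
    refine fq_root_bound ha h2 ?_ ?_ hz <;> rw [hWabs θ] <;> linarith
  have hLip : ∀ (z w w' : ℂ), Complex.abs z ≤ R → Complex.abs w ≤ 2 * r₂ →
      Complex.abs w' ≤ 2 * r₂ → Complex.abs (Fq a z w' - Fq a z w) ≤ L * Complex.abs (w' - w) := by
    intro z w w' hz hw hw'
    have hd : Fq a z w' - Fq a z w = (w' - w) * (z ^ 2 + z * (w' + w) - z) := by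
      unfold Fq; ring
    rw [hd, map_mul, mul_comm]
    have hb : Complex.abs (z ^ 2 + z * (w' + w) - z) ≤ L := by
      refine le_trans (Complex.abs.sub_le_add _ _) ?_
      have hb1 : Complex.abs (z ^ 2 + z * (w' + w)) ≤ R ^ 2 + R * (4 * r₂) := by
        refine le_trans (Complex.abs.add_le _ _) ?_
        gcongr
        · rw [map_pow]
          exact pow_le_pow_left₀ (Complex.abs.nonneg z) hz 2
        · rw [map_mul]
          have : Complex.abs (w' + w) ≤ 4 * r₂ := by
            refine le_trans (Complex.abs.add_le _ _) ?_; linarith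
          exact mul_le_mul hz this (Complex.abs.nonneg _) hR.le
      rw [hLdef]
      linarith
    exact mul_le_mul_of_nonneg_right hb (Complex.abs.nonneg _)
  -- value perturbation bound along the circle
  have hval : ∀ (z₀ : ℂ) (θ₀ θ : ℝ), Complex.abs z₀ ≤ R → Fq a z₀ (W θ₀) = 0 → |θ - θ₀| ≤ 1 →
      Complex.abs (Fq a z₀ (W θ)) ≤ L * (2 * r₂) * |θ - θ₀| := by
    intro z₀ θ₀ θ hz₀R hz₀f hθ1
    have h : Complex.abs (Fq a z₀ (W θ)) = Complex.abs (Fq a z₀ (W θ) - Fq a z₀ (W θ₀)) := by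
      rw [hz₀f, sub_zero]
    rw [h]
    refine le_trans (hLip z₀ (W θ₀) (W θ) hz₀R (by rw [hWabs]; linarith) (by rw [hWabs]; linarith)) ?_
    calc L * Complex.abs (W θ - W θ₀) ≤ L * (2 * r₂ * |θ - θ₀|) :=
          mul_le_mul_of_nonneg_left (hWlip θ₀ θ hθ1) hL.le
      _ = L * (2 * r₂) * |θ - θ₀| := by ring
  set T : Set ℝ := {θ | ∃ z : ℂ, r₁ ≤ Complex.abs z ∧ Fq a z (W θ) = 0} with hTdef
  have hTopen : IsOpen T := by
    rw [Metric.isOpen_iff]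
    intro θ₀ hθ₀
    obtain ⟨z₀, hz₀r, hz₀f⟩ := hθ₀
    have hz₀R : Complex.abs z₀ ≤ R := hRb z₀ θ₀ hz₀f
    have hz₀strict : r₁ < Complex.abs z₀ :=
      lt_of_le_of_ne hz₀r (fun h => hfree z₀ (W θ₀) h.symm (hWabs θ₀) hz₀f)
    set γ : ℝ := Complex.abs z₀ - r₁ with hγdef
    have hγ : 0 < γ := by simp [hγdef]; linarith
    refine ⟨min 1 (r₂ * γ ^ 2 / (2 * (L * (2 * r₂)))), by positivity, ?_⟩
    intro θ hθ
    rw [Metric.mem_ball, Real.dist_eq] at hθ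
    have hθ1 : |θ - θ₀| ≤ 1 := le_of_lt (lt_of_lt_of_le hθ (min_le_left _ _))
    have hθ2 : |θ - θ₀| < r₂ * γ ^ 2 / (2 * (L * (2 * r₂))) :=
      lt_of_lt_of_le hθ (min_le_right _ _)
    obtain ⟨u, v, hfac⟩ := fq_fac a (hWne θ)
    have h2L : (0:ℝ) < L * (2 * r₂) := by positivity
    have hprodlt : Complex.abs (z₀ - u) * Complex.abs (z₀ - v) < γ ^ 2 := by
      have hval2 : r₂ * (Complex.abs (z₀ - u) * Complex.abs (z₀ - v))
          = Complex.abs (Fq a z₀ (W θ)) := by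
        rw [hfac z₀, map_mul, map_mul, hWabs, mul_assoc]
      have hlt : r₂ * (Complex.abs (z₀ - u) * Complex.abs (z₀ - v)) < r₂ * γ ^ 2 := by
        rw [hval2]
        refine lt_of_le_of_lt (hval z₀ θ₀ θ hz₀R hz₀f hθ1) ?_
        calc L * (2 * r₂) * |θ - θ₀| < L * (2 * r₂) * (r₂ * γ ^ 2 / (2 * (L * (2 * r₂)))) :=
              mul_lt_mul_of_pos_left hθ2 h2L
          _ = r₂ * γ ^ 2 / 2 := by field_simp
          _ < r₂ * γ ^ 2 := half_lt_self (mul_pos h2 (pow_pos hγ 2))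
      exact lt_of_mul_lt_mul_left hlt h2.le
    have hmin : Complex.abs (z₀ - u) < γ ∨ Complex.abs (z₀ - v) < γ := by
      by_contra hcon
      push_neg at hcon
      nlinarith [hcon.1, hcon.2, Complex.abs.nonneg (z₀ - u), Complex.abs.nonneg (z₀ - v)]
    rcases hmin with hm | hm
    · refine ⟨u, ?_, by rw [hfac u]; ring⟩
      have htri : Complex.abs z₀ ≤ Complex.abs u + Complex.abs (z₀ - u) := by
        simpa using Complex.abs.add_le u (z₀ - u)
      simp only [hγdef] at hm
      linarith
    · refine ⟨v, ?_, by rw [hfac v]; ring⟩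
      have htri : Complex.abs z₀ ≤ Complex.abs v + Complex.abs (z₀ - v) := by
        simpa using Complex.abs.add_le v (z₀ - v)
      simp only [hγdef] at hm
      linarith
  have hTclosed : IsClosed T := by
    rw [← isOpen_compl_iff, Metric.isOpen_iff]
    intro θ₀ hθ₀
    obtain ⟨u, v, hfac⟩ := fq_fac a (hWne θ₀)
    have hu : Complex.abs u < r₁ := by
      by_contra hcon
      exact hθ₀ ⟨u, le_of_not_gt hcon, by rw [hfac u]; ring⟩
    have hv : Complex.abs v < r₁ := by
      by_contra hcon
      exact hθ₀ ⟨v, le_of_not_gt hcon, by rw [hfac v]; ring⟩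
    set M : ℝ := max (Complex.abs u) (Complex.abs v) with hMdef
    have hM : M < r₁ := max_lt hu hv
    have hM0 : 0 ≤ M := le_max_of_le_left (Complex.abs.nonneg u)
    set δ : ℝ := r₂ * (r₁ - M) ^ 2 / (2 * (L * (2 * r₂))) with hδdef
    have h2L : (0:ℝ) < L * (2 * r₂) := by positivity
    have h3M : 0 < r₁ - M := by linarith
    have hδpos : 0 < δ := by
      rw [hδdef]; exact div_pos (by positivity) (by positivity)
    refine ⟨min 1 δ, by positivity, ?_⟩
    intro θ hθ hmem
    rw [Metric.mem_ball, Real.dist_eq] at hθ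
    have hθ1 : |θ - θ₀| ≤ 1 := le_of_lt (lt_of_lt_of_le hθ (min_le_left _ _))
    have hθ2 : |θ - θ₀| < δ := lt_of_lt_of_le hθ (min_le_right _ _)
    obtain ⟨z, hzr, hzf⟩ := hmem
    have hzR : Complex.abs z ≤ R := hRb z θ hzf
    -- value of Fq a z (W θ₀) is small
    have hsmall : Complex.abs (Fq a z (W θ₀)) ≤ L * (2 * r₂) * |θ₀ - θ| := by
      have := hval z θ θ₀ hzR hzf (by rw [abs_sub_comm]; exact hθ1)
      exact this
    -- but also bounded below
    have hbig : r₂ * ((r₁ - M) * (r₁ - M)) ≤ Complex.abs (Fq a z (W θ₀)) := by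
      rw [hfac z, map_mul, map_mul, hWabs, mul_assoc]
      have d1 : r₁ - M ≤ Complex.abs (z - u) := by
        have htri : Complex.abs z ≤ Complex.abs (z - u) + Complex.abs u := by
          simpa using Complex.abs.add_le (z - u) u
        have : Complex.abs u ≤ M := le_max_left _ _
        linarith
      have d2 : r₁ - M ≤ Complex.abs (z - v) := by
        have htri : Complex.abs z ≤ Complex.abs (z - v) + Complex.abs v := by
          simpa using Complex.abs.add_le (z - v) v
        have : Complex.abs v ≤ M := le_max_right _ _
        linarith
      have hge : (r₁ - M) * (r₁ - M) ≤ Complex.abs (z - u) * Complex.abs (z - v) := by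
        exact mul_le_mul d1 d2 (by linarith) (Complex.abs.nonneg _)
      exact mul_le_mul_of_nonneg_left hge h2.le
    have : L * (2 * r₂) * |θ₀ - θ| < r₂ * ((r₁ - M) * (r₁ - M)) := by
      rw [abs_sub_comm]
      calc L * (2 * r₂) * |θ - θ₀| < L * (2 * r₂) * δ := mul_lt_mul_of_pos_left hθ2 h2L
        _ = r₂ * (r₁ - M) ^ 2 / 2 := by rw [hδdef]; field_simp
        _ < r₂ * (r₁ - M) ^ 2 := half_lt_self (mul_pos h2 (pow_pos h3M 2))
        _ = r₂ * ((r₁ - M) * (r₁ - M)) := by ring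
    linarith
  -- T is clopen, hence empty or univ
  have hTem : T = ∅ := by
    rcases isClopen_iff.mp ⟨hTclosed, hTopen⟩ with h | h
    · exact h
    · exfalso
      have h0 : (0 : ℝ) ∈ T := h ▸ Set.mem_univ 0
      obtain ⟨z, hzr, hzf⟩ := h0
      have : W 0 = (r₂ : ℂ) := by simp [hWdef]
      rw [this] at hzf
      exact absurd (hbase z hzf) (not_lt.mpr hzr)
  intro z w hw hzf
  by_contra hcon
  push_neg at hcon
  have hwW : w = W (Complex.arg w) := by
    rw [hWdef]
    simp only []
    rw [← hw]
    exact (Complex.abs_mul_exp_arg_mul_I w).symm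
  have : Complex.arg w ∈ T := ⟨z, hcon, by rw [← hwW]; exact hzf⟩
  rw [hTem] at this
  exact this

lemma fq_ne_zero_fst {a : ℝ} (ha : 0 < a) {z w : ℂ} (hz : Fq a z w = 0) : z ≠ 0 := by
  intro h
  rw [h] at hz
  unfold Fq at hz
  simp at hz
  exact absurd hz (by positivity)

lemma fq_ne_zero_snd {a : ℝ} (ha : 0 < a) {z w : ℂ} (hz : Fq a z w = 0) : w ≠ 0 := by
  intro h
  rw [h] at hz
  unfold Fq at hz
  simp at hz
  exact absurd hz (by positivity)

lemma fq_partner {a : ℝ} (ha : 0 < a) {z w : ℂ} (hz : Fq a z w = 0) :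
    Fq a ((a : ℂ) / (z * w)) w = 0 := by
  have hz0 : z ≠ 0 := fq_ne_zero_fst ha hz
  have hw0 : w ≠ 0 := fq_ne_zero_snd ha hz
  unfold Fq at hz ⊢
  have e : ((a : ℂ) / (z * w)) ^ 2 * w + (a : ℂ) / (z * w) * w ^ 2 - (a : ℂ) / (z * w) * w + (a : ℂ)
      = ((a : ℂ) / (z ^ 2 * w)) * (z ^ 2 * w + z * w ^ 2 - z * w + (a : ℂ)) := by
    field_simp <;> ring
  rw [e, hz, mul_zero]

lemma fq_partner_abs {a r₂ : ℝ} (ha : 0 < a) (h2 : 0 < r₂) {z w : ℂ}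
    (hw : Complex.abs w = r₂) (hz : Fq a z w = 0) :
    Complex.abs ((a : ℂ) / (z * w)) = a / (Complex.abs z * r₂) := by
  rw [map_div₀, map_mul, hw, Complex.abs_ofReal, abs_of_pos ha]

lemma lemA' {a r₁ r₂ : ℝ} (ha : 0 < a) (h1 : 0 < r₁) (h2 : 0 < r₂)
    (hfree : ∀ z w : ℂ, Complex.abs z = r₁ → Complex.abs w = r₂ → Fq a z w ≠ 0)
    (hbase : ∀ z : ℂ, Fq a z (r₂ : ℂ) = 0 → r₁ < Complex.abs z) :
    ∀ z w : ℂ, Complex.abs w = r₂ → Fq a z w = 0 → r₁ < Complex.abs z := by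
  set s : ℝ := a / (r₁ * r₂) with hs
  have hs0 : 0 < s := by positivity
  have habs2 : Complex.abs ((r₂ : ℝ) : ℂ) = r₂ := by
    rw [Complex.abs_ofReal, abs_of_pos h2]
  have hfree' : ∀ z w : ℂ, Complex.abs z = s → Complex.abs w = r₂ → Fq a z w ≠ 0 := by
    intro z w hz hw hf
    have hp := fq_partner ha hf
    have hpa := fq_partner_abs ha h2 hw hf
    rw [hz] at hpa
    have : a / (s * r₂) = r₁ := by rw [hs]; field_simp
    rw [this] at hpa
    exact hfree _ w hpa hw hp
  have hbase' : ∀ z : ℂ, Fq a z (r₂ : ℂ) = 0 → Complex.abs z < s := by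
    intro z hz
    have hp := fq_partner ha hz
    have hpa := fq_partner_abs ha h2 habs2 hz
    have hgt := hbase _ hp
    rw [hpa] at hgt
    have hz0 : 0 < Complex.abs z := by
      have := fq_ne_zero_fst ha hz
      exact Complex.abs.pos this
    rw [hs]
    rw [lt_div_iff₀ (by positivity)] at hgt
    rw [lt_div_iff₀ (by positivity)]
    nlinarith [hgt]
  intro z w hw hf
  have hlt := lemA ha hs0 h2 hfree' hbase' ((a : ℂ) / (z * w)) w hw (fq_partner ha hf)
  rw [fq_partner_abs ha h2 hw hf] at hlt
  have hz0 : 0 < Complex.abs z := Complex.abs.pos (fq_ne_zero_fst ha hf)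
  rw [hs, div_lt_div_iff₀ (by positivity) (by positivity)] at hlt
  by_contra hcon
  push_neg at hcon
  have hle : a * (Complex.abs z * r₂) ≤ a * (r₁ * r₂) :=
    mul_le_mul_of_nonneg_left (mul_le_mul_of_nonneg_right hcon h2.le) ha.le
  linarith

lemma lemStrad2 {a r₁ r₂ : ℝ} (ha : 1 / 27 < a) (h1 : 0 < r₁) (h2 : 0 < r₂) {u v : ℂ}
    (hfac : ∀ z : ℂ, Fq a z (r₂ : ℂ) = (r₂ : ℂ) * (z - u) * (z - v))
    (hu : Complex.abs u < r₁) (hv : r₁ < Complex.abs v) : r₁ + 1 < r₂ := by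
  have ha0 : (0 : ℝ) < a := lt_trans (by norm_num) ha
  have hr2ne : ((r₂ : ℝ) : ℂ) ≠ 0 := by
    simp only [ne_eq, Complex.ofReal_eq_zero]; exact ne_of_gt h2
  have h0 := hfac 0
  have h1' := hfac 1
  unfold Fq at h0 h1'
  have he0 : (r₂ : ℂ) * (u * v) = (a : ℂ) := by linear_combination -h0
  have hsum : u + v = 1 - (r₂ : ℂ) := by
    apply mul_left_cancel₀ hr2ne
    linear_combination h1' - h0
  have hve : v = ((1 - r₂ : ℝ) : ℂ) - u := by push_cast; linear_combination hsum
  -- u is real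
  have him : u.im = 0 := by
    by_contra hy
    have he1 : (r₂ : ℂ) * (u * (((1 - r₂ : ℝ) : ℂ) - u)) = (a : ℂ) := by
      rw [← hve]; exact he0
    have him0 := congrArg Complex.im he1
    simp only [Complex.mul_im, Complex.mul_re, Complex.ofReal_re, Complex.ofReal_im,
      Complex.sub_re, Complex.sub_im] at him0
    have hfactor : r₂ * (u.im * ((1 - r₂) - 2 * u.re)) = 0 := by
      linear_combination him0
    have h3 : (1 - r₂) - 2 * u.re = 0 := by
      rcases mul_eq_zero.mp hfactor with h | h
      · exact absurd h (ne_of_gt h2)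
      rcases mul_eq_zero.mp h with h | h
      · exact absurd h hy
      · exact h
    have hconj : ((1 - r₂ : ℝ) : ℂ) - u = (starRingEnd ℂ) u := by
      apply Complex.ext
      · simp only [Complex.sub_re, Complex.ofReal_re, Complex.conj_re]
        linarith
      · simp only [Complex.sub_im, Complex.ofReal_im, Complex.conj_im]
        linarith [Complex.conj_im u]
    have : Complex.abs v = Complex.abs u := by
      rw [hve, hconj, Complex.abs_conj]
    linarith
  -- reduce to real arithmetic
  set x : ℝ := u.re with hx
  have hureal : u = (x : ℂ) := Complex.ext rfl (by simp [him])
  set y : ℝ := 1 - r₂ - x with hy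
  have hvreal : v = (y : ℂ) := by rw [hve, hureal, hy]; push_cast; ring
  have hreal : r₂ * (x * y) = a := by
    have := he0
    rw [hureal, hvreal] at this
    exact_mod_cast this
  have hux : |x| < r₁ := by rw [hureal, Complex.abs_ofReal] at hu; exact hu
  have hvy : r₁ < |y| := by rw [hvreal, Complex.abs_ofReal] at hv; exact hv
  -- real analysis
  have hp : 0 < x * y := by
    have : x * y = a / r₂ := by field_simp; linarith [hreal]
    rw [this]; positivity
  have hne : x ^ 2 < y ^ 2 := by
    have h1x : |x| < |y| := lt_trans hux hvy
    calc x ^ 2 = |x| ^ 2 := (_root_.sq_abs x).symm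
      _ < |y| ^ 2 := by
          exact pow_lt_pow_left₀ h1x (abs_nonneg x) (by norm_num)
      _ = y ^ 2 := _root_.sq_abs y
  have hxyne : x ≠ y := fun h => by rw [h] at hne; linarith
  have hdisc : 0 < (x - y) ^ 2 := by
    have := sub_ne_zero.mpr hxyne
    positivity
  have hxy : x + y = 1 - r₂ := by linear_combination hy
  have hdisc2 : 4 * a < r₂ * (1 - r₂) ^ 2 := by
    have hid : r₂ * (1 - r₂) ^ 2 - 4 * a = r₂ * (x - y) ^ 2 := by
      linear_combination 4 * hreal + (-(r₂ * (1 - r₂ + x + y))) * hy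
    nlinarith [mul_pos h2 hdisc]
  have hr43 : 4 / 3 < r₂ := by
    by_contra hcon
    push_neg at hcon
    have hnn : 0 ≤ (4 - 3 * r₂) * (3 * r₂ - 1) ^ 2 :=
      mul_nonneg (by linarith) (sq_nonneg _)
    nlinarith
  have hxneg : x < 0 := by
    rcases lt_trichotomy x 0 with h | h | h
    · exact h
    · exfalso; rw [h] at hp; simp at hp
    · exfalso
      have hyneg' : y < 0 := by linarith
      nlinarith [mul_pos h (show (0:ℝ) < -y by linarith)]
  have hyneg : y < 0 := by
    by_contra hcon
    push_neg at hcon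
    nlinarith [mul_nonneg (neg_nonneg.mpr hxneg.le) hcon]
  have : |y| = -y := abs_of_neg hyneg
  rw [this] at hvy
  linarith

lemma lemA'' {a r₁ r₂ : ℝ} (ha : 0 < a) (h1 : 0 < r₁) (h2 : 0 < r₂)
    (hfree : ∀ z w : ℂ, Complex.abs z = r₁ → Complex.abs w = r₂ → Fq a z w ≠ 0)
    {u v : ℂ} (hfac : ∀ z : ℂ, Fq a z (r₂ : ℂ) = (r₂ : ℂ) * (z - u) * (z - v))
    (hu : Complex.abs u < r₁) (hv : Complex.abs v < r₁) :
    ∀ z w : ℂ, Complex.abs w = r₂ → Fq a z w = 0 → Complex.abs z < r₁ := by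
  refine lemA ha h1 h2 hfree ?_
  intro z hz
  rw [hfac z] at hz
  have hr2ne : ((r₂ : ℝ) : ℂ) ≠ 0 := by
    simp only [ne_eq, Complex.ofReal_eq_zero]; exact ne_of_gt h2
  rcases mul_eq_zero.mp hz with h | h
  · rcases mul_eq_zero.mp h with h' | h'
    · exact absurd h' hr2ne
    · rw [sub_eq_zero.mp h']; exact hu
  · rw [sub_eq_zero.mp h]; exact hv

lemma lemA2'' {a r₁ r₂ : ℝ} (ha : 0 < a) (h1 : 0 < r₁) (h2 : 0 < r₂)
    (hfree : ∀ z w : ℂ, Complex.abs z = r₁ → Complex.abs w = r₂ → Fq a z w ≠ 0)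
    {u v : ℂ} (hfac : ∀ z : ℂ, Fq a z (r₂ : ℂ) = (r₂ : ℂ) * (z - u) * (z - v))
    (hu : r₁ < Complex.abs u) (hv : r₁ < Complex.abs v) :
    ∀ z w : ℂ, Complex.abs w = r₂ → Fq a z w = 0 → r₁ < Complex.abs z := by
  refine lemA' ha h1 h2 hfree ?_
  intro z hz
  rw [hfac z] at hz
  have hr2ne : ((r₂ : ℝ) : ℂ) ≠ 0 := by
    simp only [ne_eq, Complex.ofReal_eq_zero]; exact ne_of_gt h2
  rcases mul_eq_zero.mp hz with h | h
  · rcases mul_eq_zero.mp h with h' | h'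
    · exact absurd h' hr2ne
    · rw [sub_eq_zero.mp h']; exact hu
  · rw [sub_eq_zero.mp h]; exact hv

lemma lemRay {a r₁ r₂ : ℝ} (ha : 1 / 27 < a) (h1 : 0 < r₁) (h2 : 0 < r₂)
    (hfree : ∀ z w : ℂ, Complex.abs z = r₁ → Complex.abs w = r₂ → Fq a z w ≠ 0) :
    (∀ z w : ℂ, Complex.abs w = r₂ → Fq a z w = 0 → Complex.abs z < r₁) ∨
    (∀ z w : ℂ, Complex.abs w = r₂ → Fq a z w = 0 → r₁ < Complex.abs z) ∨
    (∀ z w : ℂ, Complex.abs w = r₁ → Fq a z w = 0 → Complex.abs z < r₂) ∨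
    (∀ z w : ℂ, Complex.abs w = r₁ → Fq a z w = 0 → r₂ < Complex.abs z) := by
  have ha0 : (0 : ℝ) < a := lt_trans (by norm_num) ha
  have habs2 : Complex.abs ((r₂ : ℝ) : ℂ) = r₂ := by
    rw [Complex.abs_ofReal, abs_of_pos h2]
  have habs1 : Complex.abs ((r₁ : ℝ) : ℂ) = r₁ := by
    rw [Complex.abs_ofReal, abs_of_pos h1]
  have hfree' : ∀ z w : ℂ, Complex.abs z = r₂ → Complex.abs w = r₁ → Fq a z w ≠ 0 := by
    intro z w hz hw hf
    exact hfree w z hw hz (by rw [fq_symm a w z]; exact hf)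
  have hr1ne : ((r₁ : ℝ) : ℂ) ≠ 0 := by
    simp only [ne_eq, Complex.ofReal_eq_zero]; exact ne_of_gt h1
  have hr2ne : ((r₂ : ℝ) : ℂ) ≠ 0 := by
    simp only [ne_eq, Complex.ofReal_eq_zero]; exact ne_of_gt h2
  obtain ⟨u, v, hfac⟩ := fq_fac a hr2ne
  have hune : Complex.abs u ≠ r₁ := fun h => hfree u _ h habs2 (by rw [hfac u]; ring)
  have hvne : Complex.abs v ≠ r₁ := fun h => hfree v _ h habs2 (by rw [hfac v]; ring)
  obtain ⟨u', v', hfac'⟩ := fq_fac a hr1ne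
  have hune' : Complex.abs u' ≠ r₂ :=
    fun h => hfree' u' _ h habs1 (by rw [hfac' u']; ring)
  have hvne' : Complex.abs v' ≠ r₂ :=
    fun h => hfree' v' _ h habs1 (by rw [hfac' v']; ring)
  rcases lt_or_gt_of_ne hune with hu | hu <;> rcases lt_or_gt_of_ne hvne with hv | hv
  · exact Or.inl (lemA'' ha0 h1 h2 hfree hfac hu hv)
  all_goals try (exact Or.inr (Or.inl (lemA2'' ha0 h1 h2 hfree hfac hu hv)))
  -- remaining: straddle cases horizontally
  all_goals {
    first
    | (have hstrad1 : r₁ + 1 < r₂ := lemStrad2 ha h1 h2 hfac hu hv)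
    | (have hstrad1 : r₁ + 1 < r₂ := lemStrad2 ha h1 h2
        (fun z => by rw [hfac z]; ring) hv hu)
    rcases lt_or_gt_of_ne hune' with hu' | hu' <;> rcases lt_or_gt_of_ne hvne' with hv' | hv'
    · exact Or.inr (Or.inr (Or.inl (lemA'' ha0 h2 h1 hfree' hfac' hu' hv')))
    all_goals try (exact Or.inr (Or.inr (Or.inr (lemA2'' ha0 h2 h1 hfree' hfac' hu' hv'))))
    all_goals {
      exfalso
      first
      | (have hstrad2 : r₂ + 1 < r₁ := lemStrad2 ha h2 h1 hfac' hu' hv'; linarith)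
      | (have hstrad2 : r₂ + 1 < r₁ := lemStrad2 ha h2 h1
          (fun z => by rw [hfac' z]; ring) hv' hu'; linarith)
    }
  }


lemma unbounded_ray {B : Set (ℝ × ℝ)} {x : ℝ × ℝ} (γ : ℝ → ℝ × ℝ)
    (hcont : Continuous γ) (h0 : γ 0 = x)
    (hdist : ∀ t : ℝ, 0 ≤ t → t ≤ dist (γ t) x)
    (hmem : ∀ t : ℝ, 0 ≤ t → γ t ∈ B) :
    ¬ Bornology.IsBounded (connectedComponentIn B x) := by
  intro hb
  have hS : γ '' Set.Ici 0 ⊆ connectedComponentIn B x := by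
    refine IsPreconnected.subset_connectedComponentIn ?_ ?_ ?_
    · exact isPreconnected_Ici.image γ hcont.continuousOn
    · exact ⟨0, Set.mem_Ici.mpr le_rfl, h0⟩
    · rintro p ⟨t, ht, rfl⟩; exact hmem t ht
  have hSb := hb.subset hS
  obtain ⟨r, hr⟩ := hSb.subset_closedBall x
  have h1 : γ (|r| + 1) ∈ Metric.closedBall x r :=
    hr ⟨|r| + 1, Set.mem_Ici.mpr (by positivity), rfl⟩
  rw [Metric.mem_closedBall] at h1
  have h2 := hdist (|r| + 1) (by positivity)
  have := le_abs_self r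
  linarith

/-- Let `f = z₁²z₂ + z₁z₂² − z₁z₂ + a` with real parameter `a` and let
`A_f ⊆ ℝ²` be its amoeba.  If `0 < a < 1/27`, then `ℝ² ∖ A_f` has a nonempty bounded
connected component; if `a > 1/27`, every nonempty connected component of `ℝ² ∖ A_f` is
unbounded. -/
theorem example_amoeba_bounded_component (a : ℝ)
    (A : Set (ℝ × ℝ))
    (hA : A = {x : ℝ × ℝ | ∃ z₁ z₂ : ℂ, z₁ ≠ 0 ∧ z₂ ≠ 0 ∧
      z₁ ^ 2 * z₂ + z₁ * z₂ ^ 2 - z₁ * z₂ + (a : ℂ) = 0 ∧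
      x = (Real.log ‖z₁‖, Real.log ‖z₂‖)}) :
    (0 < a ∧ a < 1 / 27 →
      ∃ x ∈ Aᶜ, Bornology.IsBounded (connectedComponentIn Aᶜ x)) ∧
    (1 / 27 < a →
      ∀ x ∈ Aᶜ, ¬ Bornology.IsBounded (connectedComponentIn Aᶜ x)) := by
  subst hA
  constructor
  · rintro ⟨ha0, ha⟩
    have hloga : Real.log a < 0 := Real.log_neg ha0 (by linarith)
    set x0 : ℝ × ℝ := (Real.log (1/3), Real.log (1/3)) with hx0def
    have hexp0 : Real.exp x0.1 = 1/3 := Real.exp_log (by norm_num)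
    -- x0 is not in the amoeba
    have hx0 : x0 ∈ {x : ℝ × ℝ | ∃ z₁ z₂ : ℂ, z₁ ≠ 0 ∧ z₂ ≠ 0 ∧
        z₁ ^ 2 * z₂ + z₁ * z₂ ^ 2 - z₁ * z₂ + (a : ℂ) = 0 ∧
        x = (Real.log ‖z₁‖, Real.log ‖z₂‖)}ᶜ := by
      intro hmem
      obtain ⟨z₁, z₂, hz1, hz2, heq, hxy⟩ := hmem
      have e1 : Real.log (1/3) = Real.log (Complex.abs z₁) := congrArg Prod.fst hxy
      have e2 : Real.log (1/3) = Real.log (Complex.abs z₂) := congrArg Prod.snd hxy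
      have hz1a : Complex.abs z₁ = 1/3 := by
        rw [← Real.exp_log (Complex.abs.pos hz1), ← e1, Real.exp_log (by norm_num : (0:ℝ) < 1/3)]
      have hz2a : Complex.abs z₂ = 1/3 := by
        rw [← Real.exp_log (Complex.abs.pos hz2), ← e2, Real.exp_log (by norm_num : (0:ℝ) < 1/3)]
      have heq2 : ((a : ℝ) : ℂ) = -(z₁ * z₂ * (z₁ + z₂ - 1)) := by linear_combination heq
      have habs : a = Complex.abs z₁ * Complex.abs z₂ * Complex.abs (z₁ + z₂ - 1) := by
        have := congrArg Complex.abs heq2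
        rwa [Complex.abs_ofReal, _root_.abs_of_pos ha0, Complex.abs.map_neg, map_mul, map_mul] at this
      have htri : 1/3 ≤ Complex.abs (z₁ + z₂ - 1) := by
        have h1 := Complex.abs.add_le (1 - (z₁ + z₂)) (z₁ + z₂)
        rw [show (1 : ℂ) - (z₁ + z₂) + (z₁ + z₂) = 1 by ring] at h1
        have h2 := Complex.abs.add_le z₁ z₂
        have h3 : Complex.abs (1 - (z₁ + z₂)) = Complex.abs (z₁ + z₂ - 1) :=
          Complex.abs.map_sub _ _
        rw [h3] at h1
        simp only [map_one] at h1
        rw [hz1a, hz2a] at h2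
        linarith
      rw [hz1a, hz2a] at habs
      nlinarith
    -- the barrier function
    set g : ℝ × ℝ → ℝ := fun p =>
      Real.exp p.1 * Real.exp p.2 * (1 - Real.exp p.1 - Real.exp p.2) - a with hgdef
    have hgcont : Continuous g := by fun_prop
    have hgx0 : 0 < g x0 := by
      have hexp1 : Real.exp x0.2 = 1/3 := Real.exp_log (by norm_num)
      simp only [hgdef, hexp0, hexp1]
      norm_num
      linarith
    -- the component avoids {g = 0}
    have hgne : ∀ p ∈ connectedComponentIn ({x : ℝ × ℝ | ∃ z₁ z₂ : ℂ, z₁ ≠ 0 ∧ z₂ ≠ 0 ∧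
        z₁ ^ 2 * z₂ + z₁ * z₂ ^ 2 - z₁ * z₂ + (a : ℂ) = 0 ∧
        x = (Real.log ‖z₁‖, Real.log ‖z₂‖)}ᶜ) x0, g p ≠ 0 := by
      intro p hp hg0
      have hpc := connectedComponentIn_subset _ x0 hp
      apply hpc
      refine ⟨(Real.exp p.1 : ℝ), (Real.exp p.2 : ℝ), ?_, ?_, ?_, ?_⟩
      · simp [Real.exp_ne_zero]
      · simp [Real.exp_ne_zero]
      · have : Real.exp p.1 * Real.exp p.2 * (1 - Real.exp p.1 - Real.exp p.2) = a := by
          simp only [hgdef] at hg0; linarith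
        have hr : (Real.exp p.1) ^ 2 * (Real.exp p.2) + (Real.exp p.1) * (Real.exp p.2) ^ 2
            - (Real.exp p.1) * (Real.exp p.2) + a = 0 := by linear_combination -this
        exact_mod_cast hr
      · have hp1 : Complex.abs ((Real.exp p.1 : ℝ) : ℂ) = Real.exp p.1 := by
          rw [Complex.abs_ofReal, _root_.abs_of_pos (Real.exp_pos _)]
        have hp2 : Complex.abs ((Real.exp p.2 : ℝ) : ℂ) = Real.exp p.2 := by
          rw [Complex.abs_ofReal, _root_.abs_of_pos (Real.exp_pos _)]
        rw [← Complex.abs_apply, ← Complex.abs_apply, hp1, hp2, Real.log_exp, Real.log_exp]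
    -- the component is contained in {g > 0}
    have hsub : connectedComponentIn ({x : ℝ × ℝ | ∃ z₁ z₂ : ℂ, z₁ ≠ 0 ∧ z₂ ≠ 0 ∧
        z₁ ^ 2 * z₂ + z₁ * z₂ ^ 2 - z₁ * z₂ + (a : ℂ) = 0 ∧
        x = (Real.log ‖z₁‖, Real.log ‖z₂‖)}ᶜ) x0 ⊆ {p | 0 < g p} := by
      refine IsPreconnected.subset_left_of_subset_union
        (u := {p : ℝ × ℝ | 0 < g p}) (v := {p : ℝ × ℝ | g p < 0})
        (isOpen_lt continuous_const hgcont) (isOpen_lt hgcont continuous_const) ?_ ?_ ?_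
        isPreconnected_connectedComponentIn
      · rw [Set.disjoint_left]
        intro p hp1 hp2
        simp only [Set.mem_setOf_eq] at hp1 hp2
        linarith
      · intro p hp
        rcases lt_trichotomy 0 (g p) with h | h | h
        · exact Or.inl h
        · exact absurd h.symm (hgne p hp)
        · exact Or.inr h
      · exact ⟨x0, mem_connectedComponentIn hx0, hgx0⟩
    refine ⟨x0, hx0, ?_⟩
    have hUsub : {p : ℝ × ℝ | 0 < g p} ⊆
        (Set.Icc (Real.log a) 0) ×ˢ (Set.Icc (Real.log a) 0) := by
      intro p hp
      simp only [Set.mem_setOf_eq, hgdef] at hp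
      set s := Real.exp p.1 with hs
      set u := Real.exp p.2 with hu
      have hs0 : 0 < s := Real.exp_pos _
      have hu0 : 0 < u := Real.exp_pos _
      have hsum : 0 < 1 - s - u := by nlinarith [mul_pos hs0 hu0]
      have hs1 : s < 1 := by linarith
      have hu1 : u < 1 := by linarith
      have has : a < s := by
        nlinarith [mul_nonneg hs0.le (sq_nonneg (2*u - 1)), mul_nonneg (mul_nonneg hs0.le hs0.le) hu0.le]
      have hau : a < u := by
        nlinarith [mul_nonneg hu0.le (sq_nonneg (2*s - 1)), mul_nonneg (mul_nonneg hu0.le hu0.le) hs0.le]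
      constructor
      · constructor
        · have := Real.log_lt_log ha0 has
          rw [hs, Real.log_exp] at this; exact this.le
        · have h5 : Real.exp p.1 < 1 := by rw [← hs]; exact hs1
          exact (Real.exp_lt_one_iff.mp h5).le
      · constructor
        · have := Real.log_lt_log ha0 hau
          rw [hu, Real.log_exp] at this; exact this.le
        · have h5 : Real.exp p.2 < 1 := by rw [← hu]; exact hu1
          exact (Real.exp_lt_one_iff.mp h5).le
    exact ((Metric.isBounded_Icc (Real.log a) 0).prod
      (Metric.isBounded_Icc (Real.log a) 0)).subset (hsub.trans hUsub)
  · intro ha x hx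
    have ha0 : (0 : ℝ) < a := lt_trans (by norm_num) ha
    set r₁ : ℝ := Real.exp x.1 with hr₁
    set r₂ : ℝ := Real.exp x.2 with hr₂
    have h1 : 0 < r₁ := Real.exp_pos _
    have h2 : 0 < r₂ := Real.exp_pos _
    have hfq : ∀ z w : ℂ, Fq a z w = z ^ 2 * w + z * w ^ 2 - z * w + (a : ℂ) := by
      intro z w; rfl
    have hfree : ∀ z w : ℂ, Complex.abs z = r₁ → Complex.abs w = r₂ → Fq a z w ≠ 0 := by
      intro z w hz hw hf
      apply hx
      refine ⟨z, w, ?_, ?_, by rw [← hfq]; exact hf, ?_⟩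
      · intro h; rw [h] at hz; simp at hz; exact absurd hz.symm (ne_of_gt h1)
      · intro h; rw [h] at hw; simp at hw; exact absurd hw.symm (ne_of_gt h2)
      · rw [← Complex.abs_apply, ← Complex.abs_apply, hz, hw, hr₁, hr₂, Real.log_exp, Real.log_exp]
    -- a zero of f located via the amoeba membership
    have hzero : ∀ p : ℝ × ℝ, p ∈ {x : ℝ × ℝ | ∃ z₁ z₂ : ℂ, z₁ ≠ 0 ∧ z₂ ≠ 0 ∧
        z₁ ^ 2 * z₂ + z₁ * z₂ ^ 2 - z₁ * z₂ + (a : ℂ) = 0 ∧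
        x = (Real.log ‖z₁‖, Real.log ‖z₂‖)} → True := fun _ _ => trivial
    rcases lemRay ha h1 h2 hfree with hc | hc | hc | hc
    · -- no zeros with |z₁| ≥ r₁ : go right
      refine unbounded_ray (fun t => (x.1 + t, x.2)) (by fun_prop) (by simp) ?_ ?_
      · intro t ht
        rw [Prod.dist_eq]
        refine le_trans ?_ (le_max_left _ _)
        rw [Real.dist_eq]
        simp [_root_.abs_of_nonneg ht]
      · intro t ht hmem
        obtain ⟨z₁, z₂, hz1, hz2, heq, hxy⟩ := hmem
        have e1 : x.1 + t = Real.log (Complex.abs z₁) := congrArg Prod.fst hxy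
        have e2 : x.2 = Real.log (Complex.abs z₂) := congrArg Prod.snd hxy
        have hz1a : Complex.abs z₁ = Real.exp (x.1 + t) := by
          rw [e1, Real.exp_log (Complex.abs.pos hz1)]
        have hz2a : Complex.abs z₂ = r₂ := by
          rw [hr₂, e2, Real.exp_log (Complex.abs.pos hz2)]
        have hlt := hc z₁ z₂ hz2a (by rw [hfq]; exact heq)
        rw [hz1a] at hlt
        have : r₁ ≤ Real.exp (x.1 + t) := by
          rw [hr₁]; exact Real.exp_le_exp.mpr (by linarith)
        linarith
    · -- no zeros with |z₁| ≤ r₁ : go left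
      refine unbounded_ray (fun t => (x.1 - t, x.2)) (by fun_prop) (by simp) ?_ ?_
      · intro t ht
        rw [Prod.dist_eq]
        refine le_trans ?_ (le_max_left _ _)
        rw [Real.dist_eq]
        have he : x.1 - t - x.1 = -t := by ring
        rw [he, abs_neg]; exact le_abs_self t
      · intro t ht hmem
        obtain ⟨z₁, z₂, hz1, hz2, heq, hxy⟩ := hmem
        have e1 : x.1 - t = Real.log (Complex.abs z₁) := congrArg Prod.fst hxy
        have e2 : x.2 = Real.log (Complex.abs z₂) := congrArg Prod.snd hxy
        have hz1a : Complex.abs z₁ = Real.exp (x.1 - t) := by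
          rw [e1, Real.exp_log (Complex.abs.pos hz1)]
        have hz2a : Complex.abs z₂ = r₂ := by
          rw [hr₂, e2, Real.exp_log (Complex.abs.pos hz2)]
        have hlt := hc z₁ z₂ hz2a (by rw [hfq]; exact heq)
        rw [hz1a] at hlt
        have : Real.exp (x.1 - t) ≤ r₁ := by
          rw [hr₁]; exact Real.exp_le_exp.mpr (by linarith)
        linarith
    · -- no zeros with |z₂| ≥ r₂ : go up
      refine unbounded_ray (fun t => (x.1, x.2 + t)) (by fun_prop) (by simp) ?_ ?_
      · intro t ht
        rw [Prod.dist_eq]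
        refine le_trans ?_ (le_max_right _ _)
        rw [Real.dist_eq]
        simp [_root_.abs_of_nonneg ht]
      · intro t ht hmem
        obtain ⟨z₁, z₂, hz1, hz2, heq, hxy⟩ := hmem
        have e1 : x.1 = Real.log (Complex.abs z₁) := congrArg Prod.fst hxy
        have e2 : x.2 + t = Real.log (Complex.abs z₂) := congrArg Prod.snd hxy
        have hz1a : Complex.abs z₁ = r₁ := by
          rw [hr₁, e1, Real.exp_log (Complex.abs.pos hz1)]
        have hz2a : Complex.abs z₂ = Real.exp (x.2 + t) := by
          rw [e2, Real.exp_log (Complex.abs.pos hz2)]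
        have hlt := hc z₂ z₁ hz1a (by rw [fq_symm, hfq]; exact heq)
        rw [hz2a] at hlt
        have : r₂ ≤ Real.exp (x.2 + t) := by
          rw [hr₂]; exact Real.exp_le_exp.mpr (by linarith)
        linarith
    · -- no zeros with |z₂| ≤ r₂ : go down
      refine unbounded_ray (fun t => (x.1, x.2 - t)) (by fun_prop) (by simp) ?_ ?_
      · intro t ht
        rw [Prod.dist_eq]
        refine le_trans ?_ (le_max_right _ _)
        rw [Real.dist_eq]
        have he : x.2 - t - x.2 = -t := by ring
        rw [he, abs_neg]; exact le_abs_self t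
      · intro t ht hmem
        obtain ⟨z₁, z₂, hz1, hz2, heq, hxy⟩ := hmem
        have e1 : x.1 = Real.log (Complex.abs z₁) := congrArg Prod.fst hxy
        have e2 : x.2 - t = Real.log (Complex.abs z₂) := congrArg Prod.snd hxy
        have hz1a : Complex.abs z₁ = r₁ := by
          rw [hr₁, e1, Real.exp_log (Complex.abs.pos hz1)]
        have hz2a : Complex.abs z₂ = Real.exp (x.2 - t) := by
          rw [e2, Real.exp_log (Complex.abs.pos hz2)]
        have hlt := hc z₂ z₁ hz1a (by rw [fq_symm, hfq]; exact heq)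
        rw [hz2a] at hlt
        have : Real.exp (x.2 - t) ≤ r₂ := by
          rw [hr₂]; exact Real.exp_le_exp.mpr (by linarith)
        linarith
end
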